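/- arXiv:0812.2734 — 3 statements merged into one kernel-verified Lean document; each statement's English description precedes it below -/
import Mathlib

section
/- Let G be a chordal graph, T a clique tree of G, and z1, z2, z3, z4 four vertices forming an asteroidal quadruple. Then the minimal subtree T(z1,z2,z3,z4) of T connecting the subtrees T^{z1}, T^{z2}, T^{z3}, T^{z4} has exactly four leaves. -/
open SimpleGraph

variable {V : Type*}

/-- A graph is chordal if it contains no induced cycle of length at least four. -/
def IsChordal (G : SimpleGraph V) : Prop :=
  ∀ n : ℕ, 4 ≤ n → IsEmpty (SimpleGraph.cycleGraph n ↪g G)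

/-- `S` separates `u` from `v`: every walk from `u` to `v` meets `S`, and `u, v ∉ S`. -/
def IsSeparator (G : SimpleGraph V) (u v : V) (S : Set V) : Prop :=
  u ∉ S ∧ v ∉ S ∧ ∀ p : G.Walk u v, ∃ x ∈ p.support, x ∈ S

/-- A `{u,v}`-separator: a separator of `u,v` minimal with this property. -/
def IsMinUVSeparator (G : SimpleGraph V) (u v : V) (S : Set V) : Prop :=
  IsSeparator G u v S ∧ ∀ T, T ⊂ S → ¬ IsSeparator G u v T

/-- A minimal separator: a `{u,v}`-separator for some non-adjacent pair `u ≠ v`. -/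
def IsMinimalSeparator (G : SimpleGraph V) (S : Set V) : Prop :=
  ∃ u v, u ≠ v ∧ ¬ G.Adj u v ∧ IsMinUVSeparator G u v S

/-- A maximal clique. -/
def IsMaxClique (G : SimpleGraph V) (Q : Set V) : Prop :=
  G.IsClique Q ∧ ∀ R, G.IsClique R → Q ⊆ R → Q = R

abbrev MaxClique (G : SimpleGraph V) := {Q : Set V // IsMaxClique G Q}

/-- A clique tree of `G`: a tree on the maximal cliques of `G` such that for every
vertex `v` the maximal cliques containing `v` induce a (nonempty connected) subtree. -/
structure CliqueTree (G : SimpleGraph V) where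
  tree : SimpleGraph (MaxClique G)
  isTree : tree.IsTree
  subtree : ∀ v : V, ((tree.induce {Q : MaxClique G | v ∈ Q.1})).Connected

/-- An asteroidal triple: three pairwise non-adjacent vertices such that any two are
joined by a path avoiding the closed neighborhood of the third. -/
def IsAsteroidalTriple (G : SimpleGraph V) (a b c : V) : Prop :=
  a ≠ b ∧ b ≠ c ∧ a ≠ c ∧ ¬ G.Adj a b ∧ ¬ G.Adj b c ∧ ¬ G.Adj a c ∧
  (∃ p : G.Walk a b, ∀ x ∈ p.support, x ≠ c ∧ ¬ G.Adj c x) ∧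
  (∃ p : G.Walk b c, ∀ x ∈ p.support, x ≠ a ∧ ¬ G.Adj a x) ∧
  (∃ p : G.Walk a c, ∀ x ∈ p.support, x ≠ b ∧ ¬ G.Adj b x)
/-- A chordless (induced) path `x 0 - x 1 - ⋯ - x n`: injective, with adjacency exactly
between consecutive vertices. -/
def IsChordlessPathFun (G : SimpleGraph V) {n : ℕ} (x : Fin (n+1) → V) : Prop :=
  Function.Injective x ∧ ∀ i j : Fin (n+1), i < j → (G.Adj (x i) (x j) ↔ (j : ℕ) = (i : ℕ) + 1)

/-- Attachment of type 1 on `{l1,l2}, {r1,r2}` using vertices of `Z`. -/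
def Attach1 (G : SimpleGraph V) (Z : Set V) (l1 l2 r1 r2 : V) : Prop :=
  ∃ z ∈ Z, ∃ z' ∈ Z, z ≠ z' ∧ ¬ G.Adj z z' ∧
    G.Adj z l1 ∧ G.Adj z l2 ∧ G.Adj z r1 ∧ ¬ G.Adj z r2 ∧
    G.Adj z' r1 ∧ G.Adj z' r2 ∧ G.Adj z' l1 ∧ ¬ G.Adj z' l2

/-- Attachment of type 2 on `{l1,l2}, {r1,r2}` using vertices of `Z`, relative to the
set `P = X ∪ Y ∪ {u,v}` of path vertices.  Here `z 0 = l1`, `z (last) = r1` and the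
interior values of `z` are the `2t+1` clique vertices; `z' k` sees exactly
`z k.castSucc` and `z k.succ`. -/
def Attach2 (G : SimpleGraph V) (Z P : Set V) (l1 l2 r1 r2 : V) : Prop :=
  ∃ (t : ℕ) (z : Fin (2*t+3) → V) (z' : Fin (2*t+2) → V),
    z 0 = l1 ∧ z (Fin.last (2*t+2)) = r1 ∧
    Function.Injective z ∧ Function.Injective z' ∧
    (∀ k : Fin (2*t+3), k ≠ 0 → k ≠ Fin.last (2*t+2) → z k ∈ Z) ∧
    (∀ k, z' k ∈ Z) ∧
    G.IsClique ({l1, l2, r1, r2} ∪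
      {w | ∃ k : Fin (2*t+3), k ≠ 0 ∧ k ≠ Fin.last (2*t+2) ∧ z k = w}) ∧
    (∀ k : Fin (2*t+3), k ≠ 0 → k ≠ Fin.last (2*t+2) → ∀ w ∈ P,
      (G.Adj (z k) w ↔ w = l1 ∨ w = l2 ∨ w = r1 ∨ w = r2)) ∧
    (∀ k m : Fin (2*t+2), k ≠ m → ¬ G.Adj (z' k) (z' m)) ∧
    (∀ k : Fin (2*t+2), ∀ w,
      w ∈ P ∪ ({l1, l2, r1, r2} ∪
        {w | ∃ k : Fin (2*t+3), k ≠ 0 ∧ k ≠ Fin.last (2*t+2) ∧ z k = w}) →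
      (G.Adj (z' k) w ↔ w = z k.castSucc ∨ w = z k.succ))

/-- Two non-adjacent vertices `u, v` are linked by a strong path: either they have a
common neighbor, or there are two chordless paths `u-x₁-⋯-x_r-v`, `u-y₁-⋯-y_s-v`
(`r,s ≥ 2`) with disjoint interiors, and a set `Z` disjoint from them, such that every
clique of size four `x_i, x_{i+1}, y_j, y_{j+1}` carries an attachment of type 1 or 2. -/
def LinkedByStrongPath (G : SimpleGraph V) (u v : V) : Prop :=
  (∃ w, G.Adj u w ∧ G.Adj v w) ∨
  (∃ (r s : ℕ), 2 ≤ r ∧ 2 ≤ s ∧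
    ∃ (x : Fin (r+2) → V) (y : Fin (s+2) → V) (Z : Set V),
      x 0 = u ∧ x (Fin.last (r+1)) = v ∧ y 0 = u ∧ y (Fin.last (s+1)) = v ∧
      IsChordlessPathFun G x ∧ IsChordlessPathFun G y ∧
      (∀ i : Fin (r+2), i ≠ 0 → i ≠ Fin.last (r+1) →
        ∀ j : Fin (s+2), j ≠ 0 → j ≠ Fin.last (s+1) → x i ≠ y j) ∧
      Z ∩ (Set.range x ∪ Set.range y) = ∅ ∧
      ∀ i j : ℕ, ∀ _hi1 : 1 ≤ i, ∀ _hi2 : i + 1 ≤ r, ∀ _hj1 : 1 ≤ j, ∀ _hj2 : j + 1 ≤ s,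
        G.Adj (x ⟨i, by omega⟩) (y ⟨j, by omega⟩) →
        G.Adj (x ⟨i, by omega⟩) (y ⟨j+1, by omega⟩) →
        G.Adj (x ⟨i+1, by omega⟩) (y ⟨j, by omega⟩) →
        G.Adj (x ⟨i+1, by omega⟩) (y ⟨j+1, by omega⟩) →
        ∃ l1 l2 r1 r2 : V,
          ((l1 = x ⟨i, by omega⟩ ∧ l2 = y ⟨j, by omega⟩) ∨
           (l1 = y ⟨j, by omega⟩ ∧ l2 = x ⟨i, by omega⟩)) ∧
          ((r1 = x ⟨i+1, by omega⟩ ∧ r2 = y ⟨j+1, by omega⟩) ∨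
           (r1 = y ⟨j+1, by omega⟩ ∧ r2 = x ⟨i+1, by omega⟩)) ∧
          (Attach1 G Z l1 l2 r1 r2 ∨
           Attach2 G Z (Set.range x ∪ Set.range y) l1 l2 r1 r2))

/-- A strong asteroidal triple: an asteroidal triple each pair of which is linked by a
strong path. -/
def IsStrongAsteroidalTriple (G : SimpleGraph V) (a b c : V) : Prop :=
  IsAsteroidalTriple G a b c ∧
    LinkedByStrongPath G a b ∧ LinkedByStrongPath G b c ∧ LinkedByStrongPath G a c

/-- A weak asteroidal triple: an asteroidal triple some pair of which is linked by a
strong path. -/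
def IsWeakAsteroidalTriple (G : SimpleGraph V) (a b c : V) : Prop :=
  IsAsteroidalTriple G a b c ∧
    (LinkedByStrongPath G a b ∨ LinkedByStrongPath G b c ∨ LinkedByStrongPath G a c)

/-- An asteroidal quadruple: four vertices any three of which form an asteroidal triple. -/
def IsAsteroidalQuadruple (G : SimpleGraph V) (a b c d : V) : Prop :=
  IsAsteroidalTriple G a b c ∧ IsAsteroidalTriple G a b d ∧
  IsAsteroidalTriple G a c d ∧ IsAsteroidalTriple G b c d

/-- A weak asteroidal quadruple: four vertices any three of which form a weak
asteroidal triple. -/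
def IsWeakAsteroidalQuadruple (G : SimpleGraph V) (a b c d : V) : Prop :=
  IsWeakAsteroidalTriple G a b c ∧ IsWeakAsteroidalTriple G a b d ∧
  IsWeakAsteroidalTriple G a c d ∧ IsWeakAsteroidalTriple G b c d

/-- A clique directed path tree: a clique tree together with an orientation `D` of its
edges such that for every vertex `w` of `G`, the cliques containing `w` form a directed
path. -/
structure CliqueDPT (G : SimpleGraph V) extends CliqueTree G where
  D : MaxClique G → MaxClique G → Prop
  dadj : ∀ Q R, D Q R → tree.Adj Q R
  total : ∀ Q R, tree.Adj Q R → D Q R ∨ D R Q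
  antisymm : ∀ Q R, D Q R → ¬ D R Q
  dirpath : ∀ w : V, ∃ (n : ℕ) (e : Fin (n+1) ≃ {Q : MaxClique G // w ∈ Q.1}),
    ∀ i : Fin n, D (e i.castSucc).1 (e i.succ).1

/-- A clique rooted path tree: a clique directed path tree whose orientation makes the
tree rooted (every clique is reachable from the root along directed edges). -/
structure CliqueRPT (G : SimpleGraph V) extends CliqueDPT G where
  root : MaxClique G
  rooted : ∀ Q, Relation.ReflTransGen D root Q

/-- A directed path graph: a graph having a clique directed path tree. -/
def DirectedPathGraph (G : SimpleGraph V) : Prop := Nonempty (CliqueDPT G)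

/-- A rooted path graph: a graph having a clique rooted path tree. -/
def RootedPathGraph (G : SimpleGraph V) : Prop := Nonempty (CliqueRPT G)

/-- `T(u,v)` is a directed path: the tree path between the closest cliques containing
`u` resp. `v` (characterized by: `u` only in its first vertex, `v` only in its last)
has all its edges oriented in the same direction. -/
def TuvDirected (G : SimpleGraph V) (T : CliqueDPT G) (u v : V) : Prop :=
  ∃ (n : ℕ) (p : Fin (n+1) → MaxClique G),
    Function.Injective p ∧
    u ∈ (p 0).1 ∧ v ∈ (p (Fin.last n)).1 ∧
    (∀ i, i ≠ (0 : Fin (n+1)) → u ∉ (p i).1) ∧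
    (∀ i, i ≠ Fin.last n → v ∉ (p i).1) ∧
    ((∀ i : Fin n, T.D (p i.castSucc) (p i.succ)) ∨
     (∀ i : Fin n, T.D (p i.succ) (p i.castSucc)))
/-- `Q` is a leaf of the subtree induced on `W`: it lies in `W` and has exactly one
neighbor in `W`. -/
def IsLeafIn (T : SimpleGraph α) (W : Set α) (Q : α) : Prop :=
  Q ∈ W ∧ ∃! R, R ∈ W ∧ T.Adj Q R

/-- `W` is a connected set of cliques of the clique tree `T` meeting each of the
subtrees `T^{z1}, T^{z2}, T^{z3}`. -/
def IsConnector3 (G : SimpleGraph V) (T : CliqueTree G) (z1 z2 z3 : V)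
    (W : Set (MaxClique G)) : Prop :=
  (T.tree.induce W).Connected ∧
    (∃ Q ∈ W, z1 ∈ Q.1) ∧ (∃ Q ∈ W, z2 ∈ Q.1) ∧ (∃ Q ∈ W, z3 ∈ Q.1)

/-- `W` is a connected set of cliques of the clique tree `T` meeting each of the
subtrees `T^{z1}, T^{z2}, T^{z3}, T^{z4}`. -/
def IsConnector4 (G : SimpleGraph V) (T : CliqueTree G) (z1 z2 z3 z4 : V)
    (W : Set (MaxClique G)) : Prop :=
  (T.tree.induce W).Connected ∧
    (∃ Q ∈ W, z1 ∈ Q.1) ∧ (∃ Q ∈ W, z2 ∈ Q.1) ∧ (∃ Q ∈ W, z3 ∈ Q.1) ∧ (∃ Q ∈ W, z4 ∈ Q.1)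

/-- An interval graph: the intersection graph of a family of (nonempty) closed
intervals of the real line. -/
def IsIntervalGraph (G : SimpleGraph V) : Prop :=
  ∃ a b : V → ℝ, (∀ v, a v ≤ b v) ∧
    ∀ u v : V, G.Adj u v ↔ u ≠ v ∧ (Set.Icc (a u) (b u) ∩ Set.Icc (a v) (b v)).Nonempty

/-- The underlying tree of `T` is a path: every vertex has at most two neighbors. -/
def CliqueTree.IsCliquePath (G : SimpleGraph V) (T : CliqueTree G) : Prop :=
  ∀ Q a b c : MaxClique G, T.tree.Adj Q a → T.tree.Adj Q b → T.tree.Adj Q c →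
    a = b ∨ a = c ∨ b = c

section AuxLemmas

open Relation

variable {α : Type*}

private def relIn (H : SimpleGraph α) (S : Set α) : α → α → Prop :=
  fun X Y => H.Adj X Y ∧ X ∈ S ∧ Y ∈ S

private lemma relIn_symm (H : SimpleGraph α) (S : Set α) : Symmetric (relIn H S) :=
  fun _ _ h => ⟨h.1.symm, h.2.2, h.2.1⟩

private def avoidRel (H : SimpleGraph α) (Q : α) : α → α → Prop :=
  fun X Y => H.Adj X Y ∧ X ≠ Q ∧ Y ≠ Q

private lemma avoidRel_symm (H : SimpleGraph α) (Q : α) : Symmetric (avoidRel H Q) :=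
  fun _ _ h => ⟨h.1.symm, h.2.2, h.2.1⟩

private lemma bridge1 {H : SimpleGraph α} {S : Set α} (h : (H.induce S).Connected)
    {a b : α} (ha : a ∈ S) (hb : b ∈ S) : ReflTransGen (relIn H S) a b := by
  obtain ⟨p⟩ := h.preconnected ⟨a, ha⟩ ⟨b, hb⟩
  have aux : ∀ {x y : S} (_ : (H.induce S).Walk x y), ReflTransGen (relIn H S) x.1 y.1 := by
    intro x y p
    induction p with
    | nil => exact .refl
    | cons h p ih => exact .head ⟨h, (by exact Subtype.mem _), (by exact Subtype.mem _)⟩ ih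
  exact aux p

private lemma bridge2 {H : SimpleGraph α} {S : Set α} (hne : S.Nonempty)
    (h : ∀ a ∈ S, ∀ b ∈ S, ReflTransGen (relIn H S) a b) : (H.induce S).Connected := by
  rw [SimpleGraph.connected_iff]
  refine ⟨?_, ⟨⟨hne.choose, hne.choose_spec⟩⟩⟩
  rintro ⟨a, ha⟩ ⟨b, hb⟩
  have hr := h a ha b hb
  induction hr using Relation.ReflTransGen.head_induction_on with
  | refl => rfl
  | head hrel _ ih =>
      exact (SimpleGraph.Adj.reachable
        (by exact hrel.1 : (H.induce S).Adj ⟨_, hrel.2.1⟩ ⟨_, hrel.2.2⟩)).trans (ih hrel.2.2)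

private lemma noConnAvoid {H : SimpleGraph α} (hH : H.IsTree) {Q R1 R2 : α}
    (h1 : H.Adj Q R1) (h2 : H.Adj Q R2) (hne : R1 ≠ R2) :
    ¬ ReflTransGen (avoidRel H Q) R1 R2 := by
  intro hrtg
  haveI := Classical.decEq α
  have aux : ∀ {A B : α}, A ≠ Q → ReflTransGen (avoidRel H Q) A B →
      ∃ p : H.Walk A B, ∀ x ∈ p.support, x ≠ Q := by
    intro A B hA hAB
    induction hAB with
    | refl => exact ⟨Walk.nil, by simp [hA]⟩
    | tail hab hbc ih =>
        obtain ⟨p, hp⟩ := ih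
        refine ⟨p.concat hbc.1, ?_⟩
        intro x hx
        rw [Walk.support_concat, List.mem_append] at hx
        rcases hx with h | h
        · exact hp x h
        · simp only [List.mem_singleton] at h
          exact h ▸ hbc.2.2
  obtain ⟨p, hp⟩ := aux h1.ne' hrtg
  have hq : (Walk.cons h1.symm (Walk.cons h2 Walk.nil) : H.Walk R1 R2).IsPath := by
    rw [Walk.isPath_def]
    simp [h1.ne', hne, h2.ne]
  have := (hH.existsUnique_path R1 R2).unique p.bypass_isPath hq
  have hQmem : Q ∈ p.bypass.support := by
    rw [this]; simp
  exact hp Q (p.support_bypass_subset hQmem) rfl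

private lemma leaf_removal {H : SimpleGraph α} {W : Set α} {L R0 : α}
    (hR0W : R0 ∈ W) (hAdj : H.Adj L R0)
    (huniq : ∀ R, R ∈ W ∧ H.Adj L R → R = R0) :
    ∀ {A B : α}, ReflTransGen (relIn H W) A B → A ∈ W \ {L} → B ∈ W \ {L} →
      ReflTransGen (relIn H (W \ {L})) A B := by
  classical
  have hLR0 : L ≠ R0 := hAdj.ne
  set pr : α → α := fun X => if X = L then R0 else X with hpr
  have hprS : ∀ X, X ∈ W → pr X ∈ W \ {L} := by
    intro X hX
    by_cases h : X = L
    · simp [pr, h, hR0W, hLR0.symm]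
    · simp [pr, h, hX]
  have key : ∀ {A B : α}, ReflTransGen (relIn H W) A B →
      ReflTransGen (relIn H (W \ {L})) (pr A) (pr B) := by
    intro A B hAB
    induction hAB with
    | refl => exact .refl
    | tail hab hbc ih =>
        rcases hbc with ⟨hadj, hbW, hcW⟩
        rename_i b c
        by_cases hb : b = L
        · by_cases hc : c = L
          · exact absurd (hc ▸ hb ▸ hadj) (H.irrefl)
          · have : c = R0 := huniq c ⟨hcW, by rw [← hb]; exact hadj⟩
            have : pr b = pr c := by simp [pr, hb, hc, this]
            exact this ▸ ih
        · by_cases hc : c = L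
          · have : b = R0 := huniq b ⟨hbW, by rw [← hc]; exact hadj.symm⟩
            have : pr b = pr c := by simp [pr, hb, hc, this]
            exact this ▸ ih
          · refine ih.tail ⟨?_, hprS b hbW, hprS c hcW⟩
            simpa [pr, hb, hc] using hadj
  intro A B hAB hA hB
  have hA' : A ≠ L := fun h => hA.2 (by simp [h])
  have hB' : B ≠ L := fun h => hB.2 (by simp [h])
  have := key hAB
  simpa [pr, hA', hB'] using this

private lemma branch_conn {H : SimpleGraph α} {W : Set α} {Q R1 : α}
    (hQW : Q ∈ W) (hR1Q : R1 ≠ Q) :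
    ∀ {A : α}, ReflTransGen (relIn H W) A Q →
      A ∈ W \ {P | ReflTransGen (fun X Y => H.Adj X Y ∧ X ∈ W ∧ Y ∈ W ∧ X ≠ Q ∧ Y ≠ Q) R1 P} →
      ReflTransGen (relIn H (W \ {P | ReflTransGen (fun X Y => H.Adj X Y ∧ X ∈ W ∧ Y ∈ W ∧ X ≠ Q ∧ Y ≠ Q) R1 P})) A Q := by
  set rel' : α → α → Prop := fun X Y => H.Adj X Y ∧ X ∈ W ∧ Y ∈ W ∧ X ≠ Q ∧ Y ≠ Q with hrel'
  set CC : Set α := {P | ReflTransGen rel' R1 P} with hCC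
  have hQCC : Q ∉ CC := by
    intro h
    rcases (ReflTransGen.cases_tail h) with h | ⟨b, _, hb⟩
    · exact hR1Q h.symm
    · exact hb.2.2.2.2 rfl
  intro A hAQ
  induction hAQ using Relation.ReflTransGen.head_induction_on with
  | refl => intro _; exact .refl
  | head hrel hrtg ih =>
      rename_i A B
      intro hA
      rcases hrel with ⟨hadj, hAW, hBW⟩
      by_cases hAQ' : A = Q
      · exact hAQ' ▸ .refl
      · by_cases hBQ : B = Q
        · exact .single ⟨hBQ ▸ hadj, hA, ⟨hQW, hQCC⟩⟩
        · have hBS : B ∈ W \ CC := by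
            refine ⟨hBW, fun hBCC => ?_⟩
            exact hA.2 (hBCC.tail ⟨hadj.symm, hBW, hAW, hBQ, hAQ'⟩)
          exact (ih hBS).head ⟨hadj, hA, hBS⟩

end AuxLemmas
section AuxLemmas2

open Relation

variable {V : Type*}

private lemma exists_maxClique_superset [Fintype V] {G : SimpleGraph V} {s : Set V}
    (hs : G.IsClique s) : ∃ M : MaxClique G, s ⊆ M.1 := by
  classical
  have hfam : {R : Set V | G.IsClique R ∧ s ⊆ R}.Finite := Set.toFinite _
  have hne : {R : Set V | G.IsClique R ∧ s ⊆ R}.Nonempty := ⟨s, hs, subset_rfl⟩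
  obtain ⟨Q, hQ, hmax⟩ := Set.Finite.exists_maximalFor Set.ncard _ hfam hne
  refine ⟨⟨Q, hQ.1, ?_⟩, hQ.2⟩
  intro R hR hQR
  have hRmem : R ∈ {R : Set V | G.IsClique R ∧ s ⊆ R} := ⟨hR, hQ.2.trans hQR⟩
  have hle : Q.ncard ≤ R.ncard := Set.ncard_le_ncard hQR (Set.toFinite R)
  exact Set.eq_of_subset_of_ncard_le hQR (hmax hRmem hle) (Set.toFinite R)

private lemma exists_maxClique_edge [Fintype V] {G : SimpleGraph V} {u v : V}
    (h : G.Adj u v) : ∃ M : MaxClique G, u ∈ M.1 ∧ v ∈ M.1 := by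
  obtain ⟨M, hM⟩ := exists_maxClique_superset (isClique_pair.mpr fun _ => h)
  exact ⟨M, hM (by simp), hM (by simp)⟩

private lemma sameVert {G : SimpleGraph V} (T : CliqueTree G) {Q : MaxClique G} {v : V}
    (hvQ : v ∉ Q.1) {A B : MaxClique G} (hA : v ∈ A.1) (hB : v ∈ B.1) :
    ReflTransGen (avoidRel T.tree Q) A B := by
  have h := bridge1 (T.subtree v) (a := A) (b := B) hA hB
  refine ReflTransGen.mono ?_ _ _ h
  rintro X Y ⟨hadj, hX, hY⟩
  exact ⟨hadj, fun e => hvQ (e ▸ hX), fun e => hvQ (e ▸ hY)⟩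

private lemma walk_hits [Fintype V] {G : SimpleGraph V} (T : CliqueTree G)
    {Q A B : MaxClique G} {a b : V}
    (ha : a ∈ A.1) (haQ : a ∉ Q.1) (hb : b ∈ B.1) (hbQ : b ∉ Q.1)
    (hn : ¬ ReflTransGen (avoidRel T.tree Q) A B)
    (p : G.Walk a b) : ∃ x ∈ p.support, x ∈ Q.1 := by
  have aux : ∀ {u v : V} (p : G.Walk u v) (U : MaxClique G), u ∈ U.1 →
      ReflTransGen (avoidRel T.tree Q) A U →
      (∀ Bc : MaxClique G, v ∈ Bc.1 → ¬ ReflTransGen (avoidRel T.tree Q) A Bc) →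
      ∃ x ∈ p.support, x ∈ Q.1 := by
    intro u v p
    induction p with
    | nil =>
        intro U hU hAU hend
        exact absurd hAU (hend U hU)
    | cons hadj p ih =>
        rename_i u w _
        intro U hU hAU hend
        by_cases huQ : u ∈ Q.1
        · exact ⟨u, by simp, huQ⟩
        by_cases hwQ : w ∈ Q.1
        · exact ⟨w, by simp, hwQ⟩
        obtain ⟨M, huM, hwM⟩ := exists_maxClique_edge hadj
        obtain ⟨x, hx, hxQ⟩ := ih M hwM (hAU.trans (sameVert T huQ hU huM)) hend
        exact ⟨x, by simp [hx], hxQ⟩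
  exact aux p A ha .refl fun Bc hbBc hABc => hn (hABc.trans (sameVert T hbQ hbBc hb))

private def WalkAvoid (G : SimpleGraph V) (a b c : V) : Prop :=
  ∃ p : G.Walk a b, ∀ x ∈ p.support, x ≠ c ∧ ¬ G.Adj c x

private lemma WalkAvoid.rev {G : SimpleGraph V} {a b c : V} (h : WalkAvoid G a b c) :
    WalkAvoid G b a c := by
  obtain ⟨p, hp⟩ := h
  exact ⟨p.reverse, fun x hx => hp x (by simpa using hx)⟩

private lemma quadWalks {G : SimpleGraph V} {z1 z2 z3 z4 : V}
    (hAQ : IsAsteroidalQuadruple G z1 z2 z3 z4) :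
    ∀ a b c : V, (a = z1 ∨ a = z2 ∨ a = z3 ∨ a = z4) → (b = z1 ∨ b = z2 ∨ b = z3 ∨ b = z4) →
      (c = z1 ∨ c = z2 ∨ c = z3 ∨ c = z4) → a ≠ b → a ≠ c → b ≠ c → WalkAvoid G a b c := by
  obtain ⟨t123, t124, t134, t234⟩ := hAQ
  obtain ⟨-, -, -, -, -, -, w123, w231, w132⟩ := t123
  obtain ⟨-, -, -, -, -, -, w124, w241, w142⟩ := t124
  obtain ⟨-, -, -, -, -, -, w134, w341, w143⟩ := t134
  obtain ⟨-, -, -, -, -, -, w234, w342, w243⟩ := t234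
  have w123' : WalkAvoid G z1 z2 z3 := w123
  have w231' : WalkAvoid G z2 z3 z1 := w231
  have w132' : WalkAvoid G z1 z3 z2 := w132
  have w124' : WalkAvoid G z1 z2 z4 := w124
  have w241' : WalkAvoid G z2 z4 z1 := w241
  have w142' : WalkAvoid G z1 z4 z2 := w142
  have w134' : WalkAvoid G z1 z3 z4 := w134
  have w341' : WalkAvoid G z3 z4 z1 := w341
  have w143' : WalkAvoid G z1 z4 z3 := w143
  have w234' : WalkAvoid G z2 z3 z4 := w234
  have w342' : WalkAvoid G z3 z4 z2 := w342
  have w243' : WalkAvoid G z2 z4 z3 := w243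
  have r213 := w123'.rev
  have r321 := w231'.rev
  have r312 := w132'.rev
  have r214 := w124'.rev
  have r421 := w241'.rev
  have r412 := w142'.rev
  have r314 := w134'.rev
  have r431 := w341'.rev
  have r413 := w143'.rev
  have r324 := w234'.rev
  have r432 := w342'.rev
  have r423 := w243'.rev
  intro a b c ha hb hc hab hac hbc
  rcases ha with rfl | rfl | rfl | rfl <;> rcases hb with rfl | rfl | rfl | rfl <;>
    rcases hc with rfl | rfl | rfl | rfl <;>
      first
        | exact absurd rfl hab
        | exact absurd rfl hac
        | exact absurd rfl hbc
        | assumption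

end AuxLemmas2
section MainStep

open Relation

variable {V : Type*}

private lemma mainStep [Fintype V] {G : SimpleGraph V} (T : CliqueTree G)
    {z1 z2 z3 z4 : V} {W : Set (MaxClique G)}
    (hWconn : (T.tree.induce W).Connected)
    (hz1 : ∃ Q ∈ W, z1 ∈ Q.1) (hz2 : ∃ Q ∈ W, z2 ∈ Q.1)
    (hz3 : ∃ Q ∈ W, z3 ∈ Q.1) (hz4 : ∃ Q ∈ W, z4 ∈ Q.1)
    (hmin : ∀ W', W' ⊂ W → ¬ IsConnector4 G T z1 z2 z3 z4 W')
    (hwalk : ∀ a b c : V, (a = z1 ∨ a = z2 ∨ a = z3 ∨ a = z4) →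
      (b = z1 ∨ b = z2 ∨ b = z3 ∨ b = z4) → (c = z1 ∨ c = z2 ∨ c = z3 ∨ c = z4) →
      a ≠ b → a ≠ c → b ≠ c → WalkAvoid G a b c)
    (h12 : z1 ≠ z2) (hn12 : ¬ G.Adj z1 z2)
    {c : V} (hc4 : c = z1 ∨ c = z2 ∨ c = z3 ∨ c = z4)
    (Q : MaxClique G) (hQW : Q ∈ W) (hcQ : c ∈ Q.1) :
    IsLeafIn T.tree W Q := by
  by_contra hnl
  have hQclique : G.IsClique Q.1 := Q.2.1
  -- Q has a neighbour in W
  have hex : ∃ R, R ∈ W ∧ T.tree.Adj Q R := by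
    obtain ⟨A1, hA1W, hz1A⟩ := hz1
    obtain ⟨A2, hA2W, hz2A⟩ := hz2
    have hne : A1 ≠ Q ∨ A2 ≠ Q := by
      by_contra h
      push_neg at h
      exact hn12 (hQclique (h.1 ▸ hz1A) (h.2 ▸ hz2A) h12)
    obtain ⟨P, hPW, hPQ⟩ : ∃ P, P ∈ W ∧ P ≠ Q := by
      rcases hne with h | h
      exacts [⟨A1, hA1W, h⟩, ⟨A2, hA2W, h⟩]
    rcases ReflTransGen.cases_tail (bridge1 hWconn hPW hQW) with heq | ⟨b, _, hstep⟩
    · exact absurd heq.symm hPQ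
    · exact ⟨b, hstep.2.1, hstep.1.symm⟩
  obtain ⟨R1, hR1W, hR1adj⟩ := hex
  obtain ⟨R2, hR2, hR2ne⟩ : ∃ R2, (R2 ∈ W ∧ T.tree.Adj Q R2) ∧ R2 ≠ R1 := by
    by_contra h
    push_neg at h
    exact hnl (show Q ∈ W ∧ ∃! R, R ∈ W ∧ T.tree.Adj Q R from
      ⟨hQW, R1, ⟨hR1W, hR1adj⟩, fun y hy => h y hy⟩)
  obtain ⟨hR2W, hR2adj⟩ := hR2
  have hR1Q : R1 ≠ Q := hR1adj.ne'
  have hR2Q : R2 ≠ Q := hR2adj.ne'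
  set rel' : MaxClique G → MaxClique G → Prop :=
    fun X Y => T.tree.Adj X Y ∧ X ∈ W ∧ Y ∈ W ∧ X ≠ Q ∧ Y ≠ Q with hrel'
  have hQnotCC : ∀ R : MaxClique G, R ≠ Q → Q ∉ {P | ReflTransGen rel' R P} := by
    intro R hRQ h
    rcases ReflTransGen.cases_tail h with h | ⟨b, _, hb⟩
    · exact hRQ h.symm
    · exact hb.2.2.2.2 rfl
  set CC1 : Set (MaxClique G) := {P | ReflTransGen rel' R1 P} with hCC1
  set CC2 : Set (MaxClique G) := {P | ReflTransGen rel' R2 P} with hCC2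
  have hQCC1 : Q ∉ CC1 := hQnotCC R1 hR1Q
  have hQCC2 : Q ∉ CC2 := hQnotCC R2 hR2Q
  have hmono1 : ∀ P ∈ CC1, ReflTransGen (avoidRel T.tree Q) R1 P :=
    fun P hP => ReflTransGen.mono (fun X Y h => ⟨h.1, h.2.2.2.1, h.2.2.2.2⟩) _ _ hP
  have hmono2 : ∀ P ∈ CC2, ReflTransGen (avoidRel T.tree Q) R2 P :=
    fun P hP => ReflTransGen.mono (fun X Y h => ⟨h.1, h.2.2.2.1, h.2.2.2.2⟩) _ _ hP
  have hnoConn : ¬ ReflTransGen (avoidRel T.tree Q) R1 R2 :=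
    noConnAvoid T.isTree hR1adj hR2adj hR2ne.symm
  -- connectivity of the two reduced sets
  have hSconn : ∀ R : MaxClique G, R ≠ Q →
      (T.tree.induce (W \ {P | ReflTransGen rel' R P})).Connected := by
    intro R hRQ
    have hSne : (W \ {P | ReflTransGen rel' R P}).Nonempty := ⟨Q, hQW, hQnotCC R hRQ⟩
    apply bridge2 hSne
    intro a ha b hb
    have h1 := branch_conn hQW hRQ (bridge1 hWconn ha.1 hQW) ha
    have h2 := branch_conn hQW hRQ (bridge1 hWconn hb.1 hQW) hb
    exact h1.trans (Std.Symm.symm (self := @Relation.ReflTransGen.stdSymm _ _ ⟨fun _ _ h => relIn_symm _ _ h⟩) _ _ h2)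
  -- each reduced set misses some z
  have hfail : ∀ R : MaxClique G, R ∈ W → R ≠ Q →
      ∃ a, (a = z1 ∨ a = z2 ∨ a = z3 ∨ a = z4) ∧
        ∀ P ∈ W \ {P | ReflTransGen rel' R P}, a ∉ P.1 := by
    intro R hRW hRQ
    have hss : W \ {P | ReflTransGen rel' R P} ⊂ W :=
      (Set.ssubset_iff_of_subset Set.diff_subset).mpr ⟨R, hRW, fun h => h.2 .refl⟩
    have hnc := hmin _ hss
    by_contra hcon
    push_neg at hcon
    exact hnc ⟨hSconn R hRQ, hcon z1 (Or.inl rfl), hcon z2 (Or.inr (Or.inl rfl)),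
      hcon z3 (Or.inr (Or.inr (Or.inl rfl))), hcon z4 (Or.inr (Or.inr (Or.inr rfl)))⟩
  obtain ⟨za, hza4, hzafail⟩ := hfail R1 hR1W hR1Q
  obtain ⟨zb, hzb4, hzbfail⟩ := hfail R2 hR2W hR2Q
  have hzaQ : za ∉ Q.1 := hzafail Q ⟨hQW, hQCC1⟩
  have hzbQ : zb ∉ Q.1 := hzbfail Q ⟨hQW, hQCC2⟩
  have hzaW : ∃ P ∈ W, za ∈ P.1 := by rcases hza4 with rfl | rfl | rfl | rfl <;> assumption
  have hzbW : ∃ P ∈ W, zb ∈ P.1 := by rcases hzb4 with rfl | rfl | rfl | rfl <;> assumption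
  obtain ⟨A, hAW, hzaA⟩ := hzaW
  obtain ⟨B, hBW, hzbB⟩ := hzbW
  have hACC1 : A ∈ CC1 := by
    by_contra h
    exact hzafail A ⟨hAW, h⟩ hzaA
  have hBCC2 : B ∈ CC2 := by
    by_contra h
    exact hzbfail B ⟨hBW, h⟩ hzbB
  have hzab : za ≠ zb := by
    intro h
    have hACC2 : A ∈ CC2 := by
      by_contra h'
      exact hzbfail A ⟨hAW, h'⟩ (h ▸ hzaA)
    exact hnoConn ((hmono1 A hACC1).trans
      (Std.Symm.symm (self := @Relation.ReflTransGen.stdSymm _ _ ⟨fun _ _ h => avoidRel_symm _ _ h⟩) _ _ (hmono2 A hACC2)))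
  have hzac : za ≠ c := fun h => hzaQ (h ▸ hcQ)
  have hzbc : zb ≠ c := fun h => hzbQ (h ▸ hcQ)
  have hnAB : ¬ ReflTransGen (avoidRel T.tree Q) A B := fun h =>
    hnoConn ((hmono1 A hACC1).trans (h.trans
      (Std.Symm.symm (self := @Relation.ReflTransGen.stdSymm _ _ ⟨fun _ _ h => avoidRel_symm _ _ h⟩) _ _ (hmono2 B hBCC2))))
  obtain ⟨p, hp⟩ := hwalk za zb c hza4 hzb4 hc4 hzab hzac hzbc
  obtain ⟨x, hx, hxQ⟩ := walk_hits T hzaA hzaQ hzbB hzbQ hnAB p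
  exact (hp x hx).2 (hQclique hcQ hxQ (hp x hx).1.symm)

end MainStep
/-- If `z1, z2, z3, z4` is an asteroidal quadruple of a chordal graph `G`, then for
every clique tree `T` of `G` the minimal subtree `T(z1,z2,z3,z4)` has exactly four
leaves. -/
theorem asteroidal_quadruple_four_leaves [Fintype V] (G : SimpleGraph V)
    (hG : IsChordal G) (T : CliqueTree G) (z1 z2 z3 z4 : V)
    (hAQ : IsAsteroidalQuadruple G z1 z2 z3 z4) (W : Set (MaxClique G))
    (hW : IsConnector4 G T z1 z2 z3 z4 W)
    (hmin : ∀ W', W' ⊂ W → ¬ IsConnector4 G T z1 z2 z3 z4 W') :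
    ∃ L1 L2 L3 L4 : MaxClique G,
      L1 ≠ L2 ∧ L1 ≠ L3 ∧ L1 ≠ L4 ∧ L2 ≠ L3 ∧ L2 ≠ L4 ∧ L3 ≠ L4 ∧
      IsLeafIn T.tree W L1 ∧ IsLeafIn T.tree W L2 ∧
      IsLeafIn T.tree W L3 ∧ IsLeafIn T.tree W L4 ∧
      ∀ Q, IsLeafIn T.tree W Q → Q = L1 ∨ Q = L2 ∨ Q = L3 ∨ Q = L4 := by
  classical
  have hwalk := quadWalks hAQ
  obtain ⟨hWconn, hz1, hz2, hz3, hz4⟩ := hW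
  obtain ⟨⟨h12, h23, h13, hn12, hn23, hn13, -, -, -⟩, t124, t134, t234⟩ := hAQ
  obtain ⟨-, h24, h14, -, hn24, hn14, -, -, -⟩ := t124
  obtain ⟨-, h34, -, -, hn34, -, -, -, -⟩ := t134
  have hallLeaf : ∀ Q ∈ W, ∀ c : V, (c = z1 ∨ c = z2 ∨ c = z3 ∨ c = z4) → c ∈ Q.1 →
      IsLeafIn T.tree W Q :=
    fun Q hQ c hc hcQ =>
      mainStep T hWconn hz1 hz2 hz3 hz4 hmin hwalk h12 hn12 hc Q hQ hcQ
  obtain ⟨L1, hL1W, hz1L1⟩ := hz1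
  obtain ⟨L2, hL2W, hz2L2⟩ := hz2
  obtain ⟨L3, hL3W, hz3L3⟩ := hz3
  obtain ⟨L4, hL4W, hz4L4⟩ := hz4
  have hL1 : IsLeafIn T.tree W L1 := hallLeaf L1 hL1W z1 (Or.inl rfl) hz1L1
  have hL2 : IsLeafIn T.tree W L2 := hallLeaf L2 hL2W z2 (Or.inr (Or.inl rfl)) hz2L2
  have hL3 : IsLeafIn T.tree W L3 := hallLeaf L3 hL3W z3 (Or.inr (Or.inr (Or.inl rfl))) hz3L3
  have hL4 : IsLeafIn T.tree W L4 := hallLeaf L4 hL4W z4 (Or.inr (Or.inr (Or.inr rfl))) hz4L4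
  have hOwn : ∀ L, IsLeafIn T.tree W L →
      ∃ z, (z = z1 ∨ z = z2 ∨ z = z3 ∨ z = z4) ∧ z ∈ L.1 ∧ ∀ P ∈ W, z ∈ P.1 → P = L := by
    intro L hL
    obtain ⟨hLW, R0, ⟨hR0W, hR0adj⟩, huniq⟩ := hL
    have hR0L : R0 ≠ L := hR0adj.ne'
    have hSne : (W \ {L}).Nonempty := ⟨R0, hR0W, by simp [hR0L]⟩
    have hSconn : (T.tree.induce (W \ {L})).Connected := by
      apply bridge2 hSne
      intro a ha b hb
      exact leaf_removal hR0W hR0adj (fun R hR => huniq R hR) (bridge1 hWconn ha.1 hb.1) ha hb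
    have hss : W \ {L} ⊂ W :=
      (Set.ssubset_iff_of_subset Set.diff_subset).mpr ⟨L, hLW, by simp⟩
    have hnc := hmin _ hss
    have hfail : ∃ z, (z = z1 ∨ z = z2 ∨ z = z3 ∨ z = z4) ∧ ∀ P ∈ W \ {L}, z ∉ P.1 := by
      by_contra hcon
      push_neg at hcon
      exact hnc ⟨hSconn, hcon z1 (Or.inl rfl), hcon z2 (Or.inr (Or.inl rfl)),
        hcon z3 (Or.inr (Or.inr (Or.inl rfl))), hcon z4 (Or.inr (Or.inr (Or.inr rfl)))⟩
    obtain ⟨z, hz4', hzfail⟩ := hfail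
    have hzW : ∃ P ∈ W, z ∈ P.1 := by
      rcases hz4' with rfl | rfl | rfl | rfl
      exacts [⟨L1, hL1W, hz1L1⟩, ⟨L2, hL2W, hz2L2⟩, ⟨L3, hL3W, hz3L3⟩, ⟨L4, hL4W, hz4L4⟩]
    obtain ⟨P0, hP0W, hzP0⟩ := hzW
    have hP0L : P0 = L := by
      by_contra h
      exact hzfail P0 ⟨hP0W, by simp [h]⟩ hzP0
    refine ⟨z, hz4', hP0L ▸ hzP0, fun P hPW hzP => ?_⟩
    by_contra h
    exact hzfail P ⟨hPW, by simp [h]⟩ hzP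
  have hdist : ∀ (La Lb : MaxClique G) (za zb : V), za ∈ La.1 → zb ∈ Lb.1 →
      za ≠ zb → ¬ G.Adj za zb → La ≠ Lb := by
    intro La Lb za zb ha hb hne hnadj h
    exact hnadj (La.2.1 ha (h ▸ hb) hne)
  refine ⟨L1, L2, L3, L4, hdist L1 L2 z1 z2 hz1L1 hz2L2 h12 hn12,
    hdist L1 L3 z1 z3 hz1L1 hz3L3 h13 hn13, hdist L1 L4 z1 z4 hz1L1 hz4L4 h14 hn14,
    hdist L2 L3 z2 z3 hz2L2 hz3L3 h23 hn23, hdist L2 L4 z2 z4 hz2L2 hz4L4 h24 hn24,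
    hdist L3 L4 z3 z4 hz3L3 hz4L4 h34 hn34, hL1, hL2, hL3, hL4, ?_⟩
  intro Q hQ
  obtain ⟨z, hz4', hzQ, huz⟩ := hOwn Q hQ
  rcases hz4' with rfl | rfl | rfl | rfl
  · exact Or.inl (huz L1 hL1W hz1L1).symm
  · exact Or.inr (Or.inl (huz L2 hL2W hz2L2).symm)
  · exact Or.inr (Or.inr (Or.inl (huz L3 hL3W hz3L3).symm))
  · exact Or.inr (Or.inr (Or.inr (huz L4 hL4W hz4L4).symm))
end

section
/- A rooted path graph contains no weak asteroidal quadruple. -/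
open SimpleGraph

variable {V : Type*}

namespace RPGaux
open SimpleGraph Walk

attribute [local instance] Classical.propDecidable
set_option linter.unusedSectionVars false

variable {V : Type*} [Fintype V] {G : SimpleGraph V}

lemma exists_maxclique {S : Set V} (hS : G.IsClique S) : ∃ Q : MaxClique G, S ⊆ Q.1 := by
  have hfin : {R : Set V | G.IsClique R ∧ S ⊆ R}.Finite := Set.toFinite _
  obtain ⟨Q, hQ, hmax⟩ := Set.Finite.exists_maximalFor id _ hfin ⟨S, hS, subset_rfl⟩
  exact ⟨⟨Q, hQ.1, fun R hR hQR => subset_antisymm hQR (hmax ⟨hR, hQ.2.trans hQR⟩ hQR)⟩, hQ.2⟩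

lemma pair_clique {a b : V} (hab : G.Adj a b) : G.IsClique {a, b} := by
  intro x hx y hy hne
  rcases hx with rfl | hx <;> rcases hy with rfl | hy
  · exact absurd rfl hne
  · rw [Set.mem_singleton_iff] at hy; subst hy; exact hab
  · rw [Set.mem_singleton_iff] at hx; subst hx; exact hab.symm
  · rw [Set.mem_singleton_iff] at hx hy; subst hx; subst hy; exact absurd rfl hne

lemma exists_maxclique_pair {a b : V} (hab : G.Adj a b) :
    ∃ Q : MaxClique G, a ∈ Q.1 ∧ b ∈ Q.1 := by
  obtain ⟨Q, hQ⟩ := exists_maxclique (pair_clique hab)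
  exact ⟨Q, hQ (by simp), hQ (by simp)⟩

lemma exists_maxclique_single (a : V) : ∃ Q : MaxClique G, a ∈ Q.1 := by
  obtain ⟨Q, hQ⟩ := exists_maxclique (G := G) (S := {a}) (by intro x hx y hy hne; simp_all)
  exact ⟨Q, hQ rfl⟩

lemma clique_adj {Q : MaxClique G} {a b : V} (ha : a ∈ Q.1) (hb : b ∈ Q.1) (hne : a ≠ b) :
    G.Adj a b := Q.2.1 ha hb hne

/-- The set of maximal cliques containing a vertex. -/
def Tv (G : SimpleGraph V) (γ : V) : Set (MaxClique G) := {Q | γ ∈ Q.1}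

lemma Tv_nonempty (γ : V) : ∃ Q : MaxClique G, Q ∈ Tv G γ := exists_maxclique_single γ

section Tree

variable (c : CliqueRPT G)

noncomputable def rootPath (Q : MaxClique G) : c.tree.Walk c.root Q :=
  (c.isTree.existsUnique_path c.root Q).choose

lemma rootPath_isPath (Q : MaxClique G) : (rootPath c Q).IsPath :=
  (c.isTree.existsUnique_path c.root Q).choose_spec.1

lemma rootPath_unique {Q : MaxClique G} (p : c.tree.Walk c.root Q) (hp : p.IsPath) :
    p = rootPath c Q :=
  (c.isTree.existsUnique_path c.root Q).choose_spec.2 p hp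

/-- Ancestor relation: `X` lies on the root path of `Q`. -/
def Anc (X Q : MaxClique G) : Prop := X ∈ (rootPath c Q).support

lemma anc_self (Q : MaxClique G) : Anc c Q Q := Walk.end_mem_support _

lemma anc_root (Q : MaxClique G) : Anc c c.root Q := Walk.start_mem_support _

lemma takeUntil_rootPath {X Q : MaxClique G} (h : Anc c X Q) :
    (rootPath c Q).takeUntil X h = rootPath c X :=
  rootPath_unique c _ ((rootPath_isPath c Q).takeUntil h)

lemma anc_trans {X Y Z : MaxClique G} (h1 : Anc c X Y) (h2 : Anc c Y Z) : Anc c X Z := by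
  have h3 : X ∈ ((rootPath c Z).takeUntil Y h2).support := by
    rw [takeUntil_rootPath c h2]; exact h1
  exact Walk.support_takeUntil_subset _ _ h3

lemma anc_antisymm {X Y : MaxClique G} (h1 : Anc c X Y) (h2 : Anc c Y X) : X = Y := by
  by_contra hne
  have hp := (rootPath_isPath c X).support_nodup
  rw [← Walk.take_spec (rootPath c X) h2, Walk.support_append, List.nodup_append] at hp
  have hXd : X ∈ ((rootPath c X).dropUntil Y h2).support := Walk.end_mem_support _
  have hXt : X ∈ ((rootPath c X).dropUntil Y h2).support.tail := by
    have hc := Walk.support_eq_cons ((rootPath c X).dropUntil Y h2)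
    rw [hc, List.mem_cons] at hXd
    exact hXd.resolve_left hne
  have hX1 : X ∈ ((rootPath c X).takeUntil Y h2).support := by
    rw [takeUntil_rootPath c h2]; exact h1
  exact hp.2.2 X hX1 X hXt rfl

/-- `P` is the parent of `Q`. -/
def IsChild (P Q : MaxClique G) : Prop := c.tree.Adj P Q ∧ Anc c P Q

lemma child_support {P Q : MaxClique G} (h : c.tree.Adj P Q) (hQP : ¬ Anc c Q P) :
    rootPath c Q = (rootPath c P).concat h := by
  refine (rootPath_unique c _ ?_).symm
  rw [Walk.isPath_def, Walk.support_concat]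
  rw [List.nodup_append]
  refine ⟨(rootPath_isPath c P).support_nodup, List.nodup_singleton _, ?_⟩
  intro a ha b hb hab
  rw [List.mem_singleton] at hb
  subst hab
  subst hb
  exact hQP ha

lemma child_not_anc {P Q : MaxClique G} (h : IsChild c P Q) : ¬ Anc c Q P := by
  intro hQP
  exact h.1.ne (anc_antisymm c h.2 hQP)

lemma adj_dichotomy {P Q : MaxClique G} (h : c.tree.Adj P Q) :
    IsChild c P Q ∨ IsChild c Q P := by
  by_cases hQP : Anc c Q P
  · exact Or.inr ⟨h.symm, hQP⟩
  · refine Or.inl ⟨h, ?_⟩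
    show P ∈ (rootPath c Q).support
    rw [child_support c h hQP, Walk.support_concat, List.mem_append]
    exact Or.inl (Walk.end_mem_support _)

lemma child_anc_iff {P Q X : MaxClique G} (h : IsChild c P Q) :
    Anc c X Q ↔ (Anc c X P ∨ X = Q) := by
  have hQP := child_not_anc c h
  have := child_support c h.1 hQP
  unfold Anc
  rw [this, Walk.support_concat, List.mem_append, List.mem_singleton]

lemma child_unique {P P' Q : MaxClique G} (h : IsChild c P Q) (h' : IsChild c P' Q) :
    P = P' := by
  have h1 : Anc c P P' ∨ P = Q := (child_anc_iff c h').mp h.2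
  have h2 : Anc c P' P ∨ P' = Q := (child_anc_iff c h).mp h'.2
  rcases h1 with h1 | h1
  · rcases h2 with h2 | h2
    · exact anc_antisymm c h1 h2
    · exact absurd h2 h'.1.ne
  · exact absurd h1 h.1.ne

lemma child_length {P Q : MaxClique G} (h : IsChild c P Q) :
    (rootPath c Q).length = (rootPath c P).length + 1 := by
  rw [child_support c h.1 (child_not_anc c h), Walk.length_concat]

lemma anc_length_le {X Q : MaxClique G} (h : Anc c X Q) :
    (rootPath c X).length ≤ (rootPath c Q).length := by
  rw [← takeUntil_rootPath c h]
  exact Walk.length_takeUntil_le _ _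

lemma anc_length_lt {X Q : MaxClique G} (h : Anc c X Q) (hne : X ≠ Q) :
    (rootPath c X).length < (rootPath c Q).length := by
  have hspec := congrArg Walk.length (Walk.take_spec (rootPath c Q) h)
  rw [Walk.length_append, takeUntil_rootPath c h] at hspec
  have hvar : ((rootPath c Q).dropUntil X h).length ≠ 0 := by
    intro h0
    exact hne (Walk.eq_of_length_eq_zero h0)
  omega

end Tree

end RPGaux
namespace RPGaux
open SimpleGraph Walk

attribute [local instance] Classical.propDecidable
set_option linter.unusedSectionVars false

variable {V : Type*} [Fintype V] {G : SimpleGraph V} (c : CliqueRPT G)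

lemma mem_dropUntil_anc {X Q Y : MaxClique G} (hX : Anc c X Q)
    (hY : Y ∈ ((rootPath c Q).dropUntil X hX).support) : Anc c X Y := by
  set dX := (rootPath c Q).dropUntil X hX with hdX
  set t := dX.takeUntil Y hY with ht
  have hcand : ((rootPath c X).append t).IsPath := by
    rw [Walk.isPath_def, Walk.support_append]
    have hnd := (rootPath_isPath c Q).support_nodup
    rw [← Walk.take_spec (rootPath c Q) hX, Walk.support_append,
      takeUntil_rootPath c hX] at hnd
    have hpre : t.support.tail.Sublist dX.support.tail := by
      have h1 : t.support ++ (dX.dropUntil Y hY).support.tail = dX.support := by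
        rw [← Walk.support_append, Walk.take_spec]
      have h3 := congrArg List.tail h1
      rw [Walk.support_eq_cons t, Walk.support_eq_cons dX, List.cons_append,
        List.tail_cons, List.tail_cons] at h3
      rw [← h3]
      exact List.sublist_append_left _ _
    exact hnd.sublist (hpre.append_left _)
  have heq := rootPath_unique c _ hcand
  show X ∈ (rootPath c Y).support
  rw [← heq, Walk.mem_support_append_iff]
  exact Or.inl (Walk.end_mem_support _)

lemma anc_comparable {X Y Q : MaxClique G} (hX : Anc c X Q) (hY : Anc c Y Q) :
    Anc c X Y ∨ Anc c Y X := by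
  have h : Y ∈ (rootPath c Q).support := hY
  rw [← Walk.take_spec (rootPath c Q) hX, Walk.mem_support_append_iff] at h
  rcases h with h | h
  · right
    rw [takeUntil_rootPath c hX] at h
    exact h
  · exact Or.inl (mem_dropUntil_anc c hX h)

lemma between_mem {T B X : MaxClique G} (hTB : Anc c T B) (hTX : Anc c T X)
    (hXB : Anc c X B) : X ∈ ((rootPath c B).dropUntil T hTB).support := by
  have h : X ∈ (rootPath c B).support := hXB
  rw [← Walk.take_spec (rootPath c B) hTB, Walk.mem_support_append_iff] at h
  rcases h with h | h
  · rw [takeUntil_rootPath c hTB] at h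
    have hXT := anc_antisymm c h hTX
    rw [hXT]
    exact Walk.start_mem_support _
  · exact h

lemma rootPath_dir (Q : MaxClique G) : ∀ d ∈ (rootPath c Q).darts, c.D d.fst d.snd := by
  have hQ := c.rooted Q
  induction hQ with
  | refl =>
    have hnil : (Walk.nil : c.tree.Walk c.root c.root) = rootPath c c.root :=
      rootPath_unique c _ (by simp)
    intro d hd
    rw [← hnil] at hd
    simp at hd
  | @tail b Q' h1 h2 ih =>
    have hAdj := c.dadj _ _ h2
    have hQb : ¬ Anc c Q' b := by
      intro hanc
      have hdp : ((rootPath c b).dropUntil Q' hanc).IsPath :=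
        (rootPath_isPath c b).dropUntil hanc
      have hsingle : (Walk.cons hAdj.symm Walk.nil : c.tree.Walk Q' b).IsPath := by
        simp [Walk.isPath_def, hAdj.ne']
      have hequ := (c.isTree.existsUnique_path Q' b).unique hdp hsingle
      have hdartmem : (⟨(Q', b), hAdj.symm⟩ : c.tree.Dart) ∈
          ((rootPath c b).dropUntil Q' hanc).darts := by
        rw [hequ]
        simp
      have := ih _ (Walk.darts_dropUntil_subset _ _ hdartmem)
      exact c.antisymm _ _ h2 this
    rw [child_support c hAdj hQb]
    intro d hd
    rw [Walk.darts_concat, List.concat_eq_append, List.mem_append, List.mem_singleton] at hd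
    rcases hd with hd | hd
    · exact ih d hd
    · subst hd
      exact h2

lemma D_child {P Q : MaxClique G} (h : c.D P Q) : IsChild c P Q := by
  have hAdj := c.dadj _ _ h
  rcases adj_dichotomy c hAdj with h1 | h2
  · exact h1
  · exfalso
    have hQP := child_not_anc c h2
    have heq := child_support c h2.1 hQP
    have hdart : (⟨(Q, P), h2.1⟩ : c.tree.Dart) ∈ (rootPath c P).darts := by
      rw [heq, Walk.darts_concat, List.concat_eq_append, List.mem_append, List.mem_singleton]
      exact Or.inr rfl
    exact c.antisymm _ _ h (rootPath_dir c P _ hdart)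

lemma anc_walk {K : MaxClique G} : ∀ {X Y : MaxClique G} (w : c.tree.Walk X Y),
    Anc c K X → K ∉ w.support → Anc c K Y := by
  intro X Y w
  induction w with
  | nil => exact fun h _ => h
  | @cons X X₂ Y hadj p ih =>
    intro hK hKs
    rw [Walk.support_cons, List.mem_cons] at hKs
    push_neg at hKs
    rcases adj_dichotomy c hadj with h1 | h2
    · exact ih ((child_anc_iff c h1).mpr (Or.inl hK)) hKs.2
    · rcases (child_anc_iff c h2).mp hK with h3 | h3
      · exact ih h3 hKs.2
      · exact absurd h3 hKs.1

lemma anc_walk_down {W P : MaxClique G} (hP : IsChild c P W) :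
    ∀ {s Y : MaxClique G} (w : c.tree.Walk s Y), Anc c W s → P ∉ w.support → Anc c W Y := by
  intro s Y w
  induction w with
  | nil => exact fun h _ => h
  | @cons s X₂ Y hadj p ih =>
    intro hW hPs
    rw [Walk.support_cons, List.mem_cons] at hPs
    push_neg at hPs
    rcases adj_dichotomy c hadj with h1 | h2
    · exact ih ((child_anc_iff c h1).mpr (Or.inl hW)) hPs.2
    · rcases (child_anc_iff c h2).mp hW with h3 | h3
      · exact ih h3 hPs.2
      · have hup : P = X₂ := child_unique c hP (h3.symm ▸ h2)
        exact absurd (by rw [hup]; exact Walk.start_mem_support p) hPs.2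

noncomputable def pathBtw (X Y : MaxClique G) : c.tree.Walk X Y :=
  (c.isTree.existsUnique_path X Y).choose

lemma pathBtw_isPath (X Y : MaxClique G) : (pathBtw c X Y).IsPath :=
  (c.isTree.existsUnique_path X Y).choose_spec.1

lemma pathBtw_unique {X Y : MaxClique G} (p : c.tree.Walk X Y) (hp : p.IsPath) :
    p = pathBtw c X Y :=
  (c.isTree.existsUnique_path X Y).choose_spec.2 p hp

lemma dropUntil_eq_pathBtw {T B : MaxClique G} (h : Anc c T B) :
    (rootPath c B).dropUntil T h = pathBtw c T B :=
  pathBtw_unique c _ ((rootPath_isPath c B).dropUntil h)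

lemma pathBtw_subset_Tv {γ : V} {X Y : MaxClique G} (hX : X ∈ Tv G γ) (hY : Y ∈ Tv G γ) :
    ∀ Z ∈ (pathBtw c X Y).support, Z ∈ Tv G γ := by
  obtain ⟨w'⟩ := (c.subtree γ).preconnected ⟨X, hX⟩ ⟨Y, hY⟩
  let f := SimpleGraph.Embedding.induce (G := c.tree) {Q : MaxClique G | γ ∈ Q.1}
  have hsub : ∀ Z ∈ (w'.map f.toHom).support, Z ∈ Tv G γ := by
    intro Z hZ
    rw [Walk.support_map, List.mem_map] at hZ
    obtain ⟨z, hz, rfl⟩ := hZ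
    exact z.2
  have hbp := (w'.map f.toHom).bypass_isPath
  have heq : (w'.map f.toHom).bypass = pathBtw c X Y := pathBtw_unique c _ hbp
  intro Z hZ
  rw [← heq] at hZ
  exact hsub _ (Walk.support_bypass_subset _ hZ)

lemma between_Tv {γ : V} {T B X : MaxClique G} (hTB : Anc c T B) (hTX : Anc c T X)
    (hXB : Anc c X B) (hT : T ∈ Tv G γ) (hB : B ∈ Tv G γ) : X ∈ Tv G γ := by
  have hmem := between_mem c hTB hTX hXB
  rw [dropUntil_eq_pathBtw] at hmem
  exact pathBtw_subset_Tv c hT hB X hmem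

lemma Tv_comparable {γ : V} {X Y : MaxClique G} (hX : X ∈ Tv G γ) (hY : Y ∈ Tv G γ) :
    Anc c X Y ∨ Anc c Y X := by
  obtain ⟨n, e, he⟩ := c.dirpath γ
  have key : ∀ (k : ℕ) (i j : Fin (n+1)), (j : ℕ) = (i : ℕ) + k → Anc c (e i).1 (e j).1 := by
    intro k
    induction k with
    | zero =>
      intro i j hij
      have : i = j := Fin.ext (by omega)
      rw [this]
      exact anc_self c _
    | succ k ih =>
      intro i j hij
      have hjn := j.isLt
      have hik : (i : ℕ) + k < n := by omega
      have hj' : (i : ℕ) + k < n + 1 := by omega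
      have h1 := ih i ⟨(i : ℕ) + k, hj'⟩ rfl
      have hm2 : (⟨(i : ℕ) + k, hik⟩ : Fin n).succ = j := Fin.ext (by simp [Fin.val_succ]; omega)
      have hD := he ⟨(i : ℕ) + k, hik⟩
      have hm : (⟨(i : ℕ) + k, hik⟩ : Fin n).castSucc = ⟨(i : ℕ) + k, hj'⟩ := rfl
      rw [hm, hm2] at hD
      exact anc_trans c h1 (D_child c hD).2
  have hX' := e.apply_symm_apply ⟨X, hX⟩
  have hY' := e.apply_symm_apply ⟨Y, hY⟩
  rcases le_total ((e.symm ⟨X, hX⟩ : Fin (n+1)) : ℕ) ((e.symm ⟨Y, hY⟩ : Fin (n+1)) : ℕ) with h | h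
  · left
    have hk := key ((e.symm ⟨Y, hY⟩ : Fin (n+1)) - (e.symm ⟨X, hX⟩ : Fin (n+1)) : ℕ)
      (e.symm ⟨X, hX⟩) (e.symm ⟨Y, hY⟩) (by omega)
    rw [hX', hY'] at hk
    exact hk
  · right
    have hk := key ((e.symm ⟨X, hX⟩ : Fin (n+1)) - (e.symm ⟨Y, hY⟩ : Fin (n+1)) : ℕ)
      (e.symm ⟨Y, hY⟩) (e.symm ⟨X, hX⟩) (by omega)
    rw [hX', hY'] at hk
    exact hk

lemma Tv_anc_const {γ : V} {M : MaxClique G} (hγM : γ ∉ M.1) {X Y : MaxClique G}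
    (hX : X ∈ Tv G γ) (hY : Y ∈ Tv G γ) (h : Anc c M X) : Anc c M Y := by
  refine anc_walk c (pathBtw c X Y) h ?_
  intro hmem
  exact hγM (pathBtw_subset_Tv c hX hY M hmem)

lemma walk_phi_neg {M : MaxClique G} : ∀ {α β : V} (w : G.Walk α β),
    (∀ x ∈ w.support, x ∉ M.1) → (∃ X ∈ Tv G α, ¬ Anc c M X) →
    ∀ Y ∈ Tv G β, ¬ Anc c M Y := by
  intro α β w
  induction w with
  | nil =>
    rintro hsup ⟨X, hX, hnX⟩ Y hY hMY
    exact hnX (Tv_anc_const c (hsup _ (Walk.start_mem_support _)) hY hX hMY)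
  | @cons α γ2 β hadj p ih =>
    rintro hsup ⟨X, hX, hnX⟩ Y hY
    obtain ⟨N, hN1, hN2⟩ := exists_maxclique_pair hadj
    have hαM : α ∉ M.1 := hsup _ (Walk.start_mem_support _)
    have hnN : ¬ Anc c M N := fun hMN => hnX (Tv_anc_const c hαM hN1 hX hMN)
    refine ih ?_ ⟨N, hN2, hnN⟩ Y hY
    intro x hx
    exact hsup x (by rw [Walk.support_cons]; exact List.mem_cons_of_mem _ hx)

lemma flipfind {P Q : MaxClique G} (hc : IsChild c P Q) :
    ∀ {X Y : MaxClique G} (w : c.tree.Walk X Y), ¬ Anc c Q X → Anc c Q Y →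
      Q ∈ w.support ∧ P ∈ w.support := by
  intro X Y w
  induction w with
  | nil => exact fun h1 h2 => absurd h2 h1
  | @cons X X₂ Y hadj p ih =>
    intro h1 h2
    by_cases hmid : Anc c Q X₂
    · rcases adj_dichotomy c hadj with hd | hd
      · have hQ2 : Q = X₂ := by
          rcases (child_anc_iff c hd).mp hmid with h3 | h3
          · exact absurd h3 h1
          · exact h3
        have hP : P = X := child_unique c hc (hQ2 ▸ hd)
        constructor
        · rw [Walk.support_cons]
          exact List.mem_cons_of_mem _ (by rw [hQ2]; exact Walk.start_mem_support p)
        · rw [Walk.support_cons, hP]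
          exact List.mem_cons_self
      · exact absurd ((child_anc_iff c hd).mpr (Or.inl hmid)) h1
    · have hih := ih hmid h2
      exact ⟨by rw [Walk.support_cons]; exact List.mem_cons_of_mem _ hih.1,
             by rw [Walk.support_cons]; exact List.mem_cons_of_mem _ hih.2⟩

lemma SEP {P Q : MaxClique G} (hc : IsChild c P Q) :
    ∀ {α β : V} (w : G.Walk α β) (X : MaxClique G), X ∈ Tv G α → ¬ Anc c Q X →
      ∀ (Y : MaxClique G), Y ∈ Tv G β → Anc c Q Y →
      ∃ x ∈ w.support, x ∈ P.1 ∧ x ∈ Q.1 := by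
  intro α β w
  induction w with
  | nil =>
    intro X hX hnX Y hY hAY
    have hflip := flipfind c hc (pathBtw c X Y) hnX hAY
    have hsub := pathBtw_subset_Tv c hX hY
    exact ⟨_, Walk.start_mem_support _, hsub _ hflip.2, hsub _ hflip.1⟩
  | @cons α γ2 β hadj p ih =>
    intro X hX hnX Y hY hAY
    obtain ⟨N, hN1, hN2⟩ := exists_maxclique_pair hadj
    by_cases hAN : Anc c Q N
    · have hflip := flipfind c hc (pathBtw c X N) hnX hAN
      have hsub := pathBtw_subset_Tv c hX hN1
      exact ⟨_, Walk.start_mem_support _, hsub _ hflip.2, hsub _ hflip.1⟩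
    · obtain ⟨x, hx, hxP⟩ := ih N hN2 hAN Y hY hAY
      exact ⟨x, by rw [Walk.support_cons]; exact List.mem_cons_of_mem _ hx, hxP⟩

lemma lemG {α β ζ : V} (w0 : G.Walk α β) (hw0 : ∀ x ∈ w0.support, x ≠ ζ ∧ ¬ G.Adj ζ x)
    {X Y : MaxClique G} (hX : α ∈ X.1) (hY : β ∈ Y.1) :
    ∀ W ∈ (pathBtw c X Y).support, ζ ∉ W.1 := by
  intro W hW hζW
  have hα := hw0 α (Walk.start_mem_support _)
  have hβ := hw0 β (Walk.end_mem_support _)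
  have hXW : X ≠ W := by
    rintro rfl
    exact hα.2 (clique_adj hζW hX hα.1.symm)
  have hYW : Y ≠ W := by
    rintro rfl
    exact hβ.2 (clique_adj hζW hY hβ.1.symm)
  set p := pathBtw c X Y with hp
  have hppath := pathBtw_isPath c X Y
  have htake : (p.takeUntil W hW).IsPath := hppath.takeUntil hW
  obtain ⟨Wm, hWmadj, q, hq⟩ := Walk.exists_eq_cons_of_ne hXW.symm ((p.takeUntil W hW).reverse)
  have htake_eq : p.takeUntil W hW = q.reverse.concat hWmadj.symm := by
    rw [← Walk.reverse_reverse (p.takeUntil W hW), hq, Walk.reverse_cons, Walk.concat_eq_append]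
  have hWq : W ∉ q.reverse.support := by
    have hnd := htake.support_nodup
    rw [htake_eq, Walk.support_concat, List.nodup_append] at hnd
    intro hmem
    exact hnd.2.2 W hmem W (List.mem_singleton.mpr rfl) rfl
  have hWmtake : Wm ∈ (p.takeUntil W hW).support := by
    rw [htake_eq, Walk.support_concat, List.mem_append]
    exact Or.inl (by rw [Walk.support_reverse, List.mem_reverse]; exact Walk.start_mem_support q)
  have hWmdrop : Wm ∉ (p.dropUntil W hW).support := by
    intro hmem
    have hnd := hppath.support_nodup
    rw [← hp, ← Walk.take_spec p hW, Walk.support_append, List.nodup_append] at hnd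
    have htail : Wm ∈ ((p.dropUntil W hW).support).tail := by
      have hcons := Walk.support_eq_cons (p.dropUntil W hW)
      rw [hcons, List.mem_cons] at hmem
      exact hmem.resolve_left (fun h => hWmadj.ne h.symm)
    exact hnd.2.2 Wm hWmtake Wm htail rfl
  rcases adj_dichotomy c hWmadj.symm with hcc | hcc
  · have hsideY : Anc c W Y :=
      anc_walk_down c hcc (p.dropUntil W hW) (anc_self c W) hWmdrop
    have hsideX : ¬ Anc c W X := by
      intro hAX
      exact child_not_anc c hcc (anc_walk c q.reverse hAX hWq)
    obtain ⟨x, hxw, hxWm, hxW⟩ := SEP c hcc w0 X hX hsideX Y hY hsideY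
    have hxx := hw0 x hxw
    exact hxx.2 (clique_adj hζW hxW hxx.1.symm)
  · have hsideX : Anc c Wm X := by
      refine anc_walk_down c hcc q (anc_self c Wm) ?_
      intro hmem
      exact hWq (by rw [Walk.support_reverse, List.mem_reverse]; exact hmem)
    have hsideY : ¬ Anc c Wm Y := by
      intro hAY
      have hWm_not : Wm ∉ (p.dropUntil W hW).reverse.support := by
        rw [Walk.support_reverse, List.mem_reverse]
        exact hWmdrop
      exact child_not_anc c hcc (anc_walk c (p.dropUntil W hW).reverse hAY hWm_not)
    obtain ⟨x, hxw, hxWprf, hxWm⟩ := SEP c hcc w0.reverse Y hY hsideY X hX hsideX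
    have hxw' : x ∈ w0.support := by rwa [Walk.support_reverse, List.mem_reverse] at hxw
    have hxx := hw0 x hxw'
    exact hxx.2 (clique_adj hζW hxWprf hxx.1.symm)

end RPGaux
namespace RPGaux
open SimpleGraph Walk

attribute [local instance] Classical.propDecidable
set_option linter.unusedSectionVars false

variable {V : Type*} [Fintype V] {G : SimpleGraph V} (c : CliqueRPT G)

lemma siblings_incomparable {W p q : MaxClique G} (hp : IsChild c W p) (hq : IsChild c W q)
    (hpq : p ≠ q) : ¬ Anc c p q ∧ ¬ Anc c q p := by
  constructor
  · intro h
    rcases (child_anc_iff c hq).mp h with h2 | h2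
    · exact hp.1.ne (anc_antisymm c hp.2 h2)
    · exact hpq h2
  · intro h
    rcases (child_anc_iff c hp).mp h with h2 | h2
    · exact hq.1.ne (anc_antisymm c hq.2 h2)
    · exact hpq h2.symm

lemma star_anc {W p q : MaxClique G} (hp : IsChild c W p) (hq : IsChild c W q) (hpq : p ≠ q)
    {α β : V} (hαp : α ∈ p.1) (hαW : α ∈ W.1) (hβq : β ∈ q.1) (hβW : β ∈ W.1)
    {X : MaxClique G} (hXα : X ∈ Tv G α) (hXβ : X ∈ Tv G β) : Anc c X W := by
  by_contra hnot
  have hsib := siblings_incomparable c hp hq hpq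
  have hpanc : Anc c p X := by
    rcases Tv_comparable c (show p ∈ Tv G α from hαp) hXα with h | h
    · exact h
    · rcases (child_anc_iff c hp).mp h with h2 | h2
      · exact absurd h2 hnot
      · exfalso
        rcases Tv_comparable c (show q ∈ Tv G β from hβq) hXβ with h3 | h3
        · exact hsib.2 (h2 ▸ h3)
        · exact hsib.1 (h2 ▸ h3)
  have hqanc : Anc c q X := by
    rcases Tv_comparable c (show q ∈ Tv G β from hβq) hXβ with h | h
    · exact h
    · rcases (child_anc_iff c hq).mp h with h2 | h2
      · exact absurd h2 hnot
      · exfalso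
        rcases Tv_comparable c (show p ∈ Tv G α from hαp) hXα with h3 | h3
        · exact hsib.1 (h2 ▸ h3)
        · exact hsib.2 (h2 ▸ h3)
  rcases anc_comparable c hpanc hqanc with h | h
  · exact hsib.1 h
  · exact hsib.2 h

lemma clique3 {a b d : V} (h1 : G.Adj a b) (h2 : G.Adj a d) (h3 : G.Adj b d) :
    G.IsClique {a, b, d} := by
  intro α hα β hβ hne
  simp only [Set.mem_insert_iff, Set.mem_singleton_iff] at hα hβ
  rcases hα with rfl | rfl | rfl <;> rcases hβ with rfl | rfl | rfl <;>
    first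
      | exact absurd rfl hne
      | assumption
      | exact h1.symm
      | exact h2.symm
      | exact h3.symm

lemma clique4 {a b d e : V} (h1 : G.Adj a b) (h2 : G.Adj a d) (h3 : G.Adj a e)
    (h4 : G.Adj b d) (h5 : G.Adj b e) (h6 : G.Adj d e) : G.IsClique {a, b, d, e} := by
  intro α hα β hβ hne
  simp only [Set.mem_insert_iff, Set.mem_singleton_iff] at hα hβ
  rcases hα with rfl | rfl | rfl | rfl <;> rcases hβ with rfl | rfl | rfl | rfl <;>
    first
      | exact absurd rfl hne
      | assumption
      | exact h1.symm
      | exact h2.symm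
      | exact h3.symm
      | exact h4.symm
      | exact h5.symm
      | exact h6.symm

lemma attach1_refute
    {W p q : MaxClique G} (hWp : IsChild c W p) (hWq : IsChild c W q) (hpq : p ≠ q)
    {l1 l2 r1 r2 : V}
    (hl1p : l1 ∈ p.1) (hr1q : r1 ∈ q.1)
    (hl1W : l1 ∈ W.1) (hl2W : l2 ∈ W.1) (hr1W : r1 ∈ W.1) (hr2W : r2 ∈ W.1)
    (hl1l2 : l1 ≠ l2) (hr1r2 : r1 ≠ r2) (hl1r1 : l1 ≠ r1) (hl1r2 : l1 ≠ r2)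
    (hl2r1 : l2 ≠ r1)
    {z z' : V}
    (hz1 : G.Adj z l1) (hz2 : G.Adj z l2) (hz3 : G.Adj z r1) (hz4 : ¬ G.Adj z r2)
    (hz'1 : G.Adj z' r1) (hz'2 : G.Adj z' r2) (hz'3 : G.Adj z' l1) (hz'4 : ¬ G.Adj z' l2)
    (hznr2 : z ≠ r2) (hz'nl2 : z' ≠ l2) : False := by
  have hcz : G.IsClique {z, l1, l2, r1} :=
    clique4 hz1 hz2 hz3 (clique_adj hl1W hl2W hl1l2) (clique_adj hl1W hr1W hl1r1)
      (clique_adj hl2W hr1W hl2r1)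
  have hcz' : G.IsClique {z', l1, r1, r2} :=
    clique4 hz'3 hz'1 hz'2 (clique_adj hl1W hr1W hl1r1) (clique_adj hl1W hr2W hl1r2)
      (clique_adj hr1W hr2W hr1r2)
  obtain ⟨Mz, hMz⟩ := exists_maxclique hcz
  obtain ⟨Mz', hMz'⟩ := exists_maxclique hcz'
  have hMz_z : z ∈ Mz.1 := hMz (by simp)
  have hMz_l1 : l1 ∈ Mz.1 := hMz (by simp)
  have hMz_l2 : l2 ∈ Mz.1 := hMz (by simp)
  have hMz_r1 : r1 ∈ Mz.1 := hMz (by simp)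
  have hMz'_z : z' ∈ Mz'.1 := hMz' (by simp)
  have hMz'_l1 : l1 ∈ Mz'.1 := hMz' (by simp)
  have hMz'_r1 : r1 ∈ Mz'.1 := hMz' (by simp)
  have hMz'_r2 : r2 ∈ Mz'.1 := hMz' (by simp)
  have hMzW : Anc c Mz W :=
    star_anc c hWp hWq hpq hl1p hl1W hr1q hr1W hMz_l1 hMz_r1
  have hMz'W : Anc c Mz' W :=
    star_anc c hWp hWq hpq hl1p hl1W hr1q hr1W hMz'_l1 hMz'_r1
  rcases anc_comparable c hMzW hMz'W with hcmp | hcmp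
  · have hbet : Mz' ∈ Tv G l2 :=
      between_Tv c hMzW hcmp hMz'W (show Mz ∈ Tv G l2 from hMz_l2) (show W ∈ Tv G l2 from hl2W)
    exact hz'4 (clique_adj hMz'_z hbet hz'nl2)
  · have hbet : Mz ∈ Tv G r2 :=
      between_Tv c hMz'W hcmp hMzW (show Mz' ∈ Tv G r2 from hMz'_r2) (show W ∈ Tv G r2 from hr2W)
    exact hz4 (clique_adj hMz_z hbet hznr2)

lemma endgame {W q M W' : MaxClique G} (hWq : IsChild c W q)
    (hW'W : Anc c W' W) (hW'q : W' ≠ q)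
    {ζ s1 s2 vv : V}
    (hζW' : ζ ∈ W'.1) (hζM : ζ ∈ M.1)
    (hqM : Anc c q M) (hqMne : q ≠ M)
    (hs1M : s1 ∈ M.1) (hs2q : s2 ∈ q.1) (hs2M : s2 ∉ M.1)
    (hLv : ∀ Y ∈ Tv G vv, Anc c q Y)
    (tail1 : G.Walk s1 vv) (h1p : tail1.IsPath)
    (ht1M : ∀ γ ∈ tail1.support, γ ≠ s1 → γ ∉ M.1)
    (ht1W : ∀ γ ∈ tail1.support, γ ≠ s1 → γ ∉ W.1)
    (ht1ζ : ∀ γ ∈ tail1.support, γ ≠ s1 → ¬ G.Adj ζ γ ∧ ζ ≠ γ)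
    (hs1vv : s1 ≠ vv)
    (tail2 : G.Walk s2 vv)
    (ht2M : ∀ γ ∈ tail2.support, γ ∉ M.1) : False := by
  have hnbq : ¬ Anc c M q := fun h => hqMne (anc_antisymm c hqM h)
  have hs2all : ∀ X ∈ Tv G s2, ¬ Anc c M X := by
    intro X hX hMX
    exact hnbq (Tv_anc_const c hs2M hX (show q ∈ Tv G s2 from hs2q) hMX)
  have hvnb : ∀ Y ∈ Tv G vv, ¬ Anc c M Y := by
    refine walk_phi_neg c tail2 ht2M ?_
    obtain ⟨X, hX⟩ := Tv_nonempty (G := G) s2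
    exact ⟨X, hX, hs2all X hX⟩
  obtain ⟨w2, hadj12, rest, hrest⟩ := Walk.exists_eq_cons_of_ne hs1vv tail1
  have hw2mem : w2 ∈ tail1.support := by
    rw [hrest, Walk.support_cons]
    exact List.mem_cons_of_mem _ (Walk.start_mem_support _)
  have hw2ne : w2 ≠ s1 := hadj12.ne'
  have hs1rest : s1 ∉ rest.support := by
    have hnd := h1p.support_nodup
    rw [hrest, Walk.support_cons, List.nodup_cons] at hnd
    exact hnd.1
  have hw2nb : ∀ Y ∈ Tv G w2, ¬ Anc c M Y := by
    refine walk_phi_neg c rest.reverse ?_ ?_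
    · intro γ hγ
      rw [Walk.support_reverse, List.mem_reverse] at hγ
      have hmem : γ ∈ tail1.support := by
        rw [hrest, Walk.support_cons]
        exact List.mem_cons_of_mem _ hγ
      exact ht1M γ hmem (fun h => hs1rest (h ▸ hγ))
    · obtain ⟨X, hX⟩ := Tv_nonempty (G := G) vv
      exact ⟨X, hX, hvnb X hX⟩
  obtain ⟨N, hNs1, hNw2⟩ := exists_maxclique_pair hadj12
  have hNnb : ¬ Anc c M N := hw2nb N hNw2
  have hNM : Anc c N M := by
    rcases Tv_comparable c (show N ∈ Tv G s1 from hNs1) (show M ∈ Tv G s1 from hs1M) with h | h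
    · exact h
    · exact absurd h hNnb
  have hW'M : Anc c W' M := anc_trans c (anc_trans c hW'W hWq.2) hqM
  rcases anc_comparable c hNM hW'M with hNW' | hNW'
  · have hqN : ¬ Anc c q N := by
      intro h
      have h2 : Anc c q W' := anc_trans c h hNW'
      exact hW'q (anc_antisymm c (anc_trans c hW'W hWq.2) h2)
    obtain ⟨Y0, hY0⟩ := Tv_nonempty (G := G) vv
    obtain ⟨γ, hγ, hγW, hγq⟩ := SEP c hWq rest N hNw2 hqN Y0 hY0 (hLv Y0 hY0)
    have hγmem : γ ∈ tail1.support := by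
      rw [hrest, Walk.support_cons]
      exact List.mem_cons_of_mem _ hγ
    exact ht1W γ hγmem (fun h => hs1rest (h ▸ hγ)) hγW
  · have hζN : N ∈ Tv G ζ :=
      between_Tv c hW'M hNW' hNM (show W' ∈ Tv G ζ from hζW') (show M ∈ Tv G ζ from hζM)
    have hcond := ht1ζ w2 hw2mem hw2ne
    exact hcond.1 (clique_adj hζN hNw2 hcond.2)

end RPGaux
namespace RPGaux
open SimpleGraph Walk

attribute [local instance] Classical.propDecidable
set_option linter.unusedSectionVars false
set_option linter.unusedVariables false
set_option maxHeartbeats 1000000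

variable {V : Type*} [Fintype V] {G : SimpleGraph V} (c : CliqueRPT G)

lemma attach2_refute
    {W p q : MaxClique G} (hWp : IsChild c W p) (hWq : IsChild c W q) (hpq : p ≠ q)
    {P' Z : Set V} (hZP : ∀ a ∈ Z, a ∉ P')
    {l1 l2 r1 r2 : V}
    (hl1P : l1 ∈ P') (hl2P : l2 ∈ P') (hr1P : r1 ∈ P') (hr2P : r2 ∈ P')
    (hl1p : l1 ∈ p.1) (hl2p : l2 ∈ p.1) (hr1q : r1 ∈ q.1) (hr2q : r2 ∈ q.1)
    (hl1W : l1 ∈ W.1) (hl2W : l2 ∈ W.1) (hr1W : r1 ∈ W.1) (hr2W : r2 ∈ W.1)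
    (hl1l2 : l1 ≠ l2) (hr1r2 : r1 ≠ r2) (hl1r1 : l1 ≠ r1) (hl1r2 : l1 ≠ r2)
    (hl2r1 : l2 ≠ r1) (hl2r2 : l2 ≠ r2)
    (hA2 : Attach2 G Z P' l1 l2 r1 r2)
    {u v : V}
    (hLu : ∀ Y ∈ Tv G u, Anc c p Y) (hLv : ∀ Y ∈ Tv G v, Anc c q Y)
    (tail1 : G.Walk r1 v) (h1p : tail1.IsPath) (hr1v : r1 ≠ v)
    (h1cond : ∀ γ ∈ tail1.support, γ ≠ r1 → γ ∈ P' ∧ γ ∉ W.1 ∧ γ ≠ l1 ∧ γ ≠ l2 ∧ γ ≠ r2)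
    (tail2 : G.Walk r2 v)
    (h2cond : ∀ γ ∈ tail2.support, γ ∈ P' ∧ γ ≠ r1)
    (tail3 : G.Walk l1 u) (h3p : tail3.IsPath) (hl1u : l1 ≠ u)
    (h3cond : ∀ γ ∈ tail3.support, γ ≠ l1 → γ ∈ P' ∧ γ ∉ W.1 ∧ γ ≠ r1 ∧ γ ≠ r2 ∧ γ ≠ l2)
    (tail4 : G.Walk l2 u)
    (h4cond : ∀ γ ∈ tail4.support, γ ∈ P' ∧ γ ≠ l1) : False := by
  obtain ⟨t, z, z', hz0, hzlast, hzinj, hz'inj, hzZ, hz'Z, hCclique, hzadjP, hz'nonadj, hz'adj⟩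
    := hA2
  set Cset : Set V := {l1, l2, r1, r2} ∪
    {w | ∃ k : Fin (2*t+3), k ≠ 0 ∧ k ≠ Fin.last (2*t+2) ∧ z k = w} with hCsetdef
  have hl1C : l1 ∈ Cset := Or.inl (by simp)
  have hl2C : l2 ∈ Cset := Or.inl (by simp)
  have hr1C : r1 ∈ Cset := Or.inl (by simp)
  have hr2C : r2 ∈ Cset := Or.inl (by simp)
  have hzC : ∀ k : Fin (2*t+3), z k ∈ Cset := by
    intro k
    by_cases h0 : k = 0
    · rw [h0, hz0]; exact hl1C
    by_cases hl : k = Fin.last (2*t+2)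
    · rw [hl, hzlast]; exact hr1C
    · exact Or.inr ⟨k, h0, hl, rfl⟩
  obtain ⟨W', hW'⟩ := exists_maxclique hCclique
  have hzW' : ∀ k : Fin (2*t+3), z k ∈ W'.1 := fun k => hW' (hzC k)
  have hl1W' : l1 ∈ W'.1 := hW' hl1C
  have hl2W' : l2 ∈ W'.1 := hW' hl2C
  have hr1W' : r1 ∈ W'.1 := hW' hr1C
  have hr2W' : r2 ∈ W'.1 := hW' hr2C
  have hz_ne_l2 : ∀ k : Fin (2*t+3), z k ≠ l2 := by
    intro k
    by_cases h0 : k = 0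
    · rw [h0, hz0]; exact hl1l2
    by_cases hl : k = Fin.last (2*t+2)
    · rw [hl, hzlast]; exact hl2r1.symm
    · intro h; exact hZP _ (hzZ k h0 hl) (h ▸ hl2P)
  have hz_ne_r2 : ∀ k : Fin (2*t+3), z k ≠ r2 := by
    intro k
    by_cases h0 : k = 0
    · rw [h0, hz0]; exact hl1r2
    by_cases hl : k = Fin.last (2*t+2)
    · rw [hl, hzlast]; exact hr1r2
    · intro h; exact hZP _ (hzZ k h0 hl) (h ▸ hr2P)
  have hz'_nadj_l2 : ∀ k : Fin (2*t+2), ¬ G.Adj (z' k) l2 := by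
    intro k hc
    rcases (hz'adj k l2 (Or.inl hl2P)).mp hc with h | h
    · exact hz_ne_l2 _ h.symm
    · exact hz_ne_l2 _ h.symm
  have hz'_nadj_r2 : ∀ k : Fin (2*t+2), ¬ G.Adj (z' k) r2 := by
    intro k hc
    rcases (hz'adj k r2 (Or.inl hr2P)).mp hc with h | h
    · exact hz_ne_r2 _ h.symm
    · exact hz_ne_r2 _ h.symm
  have hz'_ne_l2 : ∀ k : Fin (2*t+2), z' k ≠ l2 := fun k h => hZP _ (hz'Z k) (h ▸ hl2P)
  have hz'_ne_r2 : ∀ k : Fin (2*t+2), z' k ≠ r2 := fun k h => hZP _ (hz'Z k) (h ▸ hr2P)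
  have hz'_ne_z : ∀ (k : Fin (2*t+2)) (m : Fin (2*t+3)), z' k ≠ z m := by
    intro k m h
    have hadj : G.Adj (z m) l2 := hCclique (hzC m) hl2C (hz_ne_l2 m)
    rw [← h] at hadj
    exact hz'_nadj_l2 k hadj
  have hMex : ∀ k : Fin (2*t+2), ∃ M : MaxClique G,
      z' k ∈ M.1 ∧ z k.castSucc ∈ M.1 ∧ z k.succ ∈ M.1 := by
    intro k
    have ha : G.Adj (z' k) (z k.castSucc) :=
      (hz'adj k _ (Or.inr (hzC _))).mpr (Or.inl rfl)
    have hb : G.Adj (z' k) (z k.succ) :=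
      (hz'adj k _ (Or.inr (hzC _))).mpr (Or.inr rfl)
    have hcs : k.castSucc ≠ k.succ := by
      intro hcc
      have hval := congrArg Fin.val hcc
      simp [Fin.val_succ] at hval
    have hd : G.Adj (z k.castSucc) (z k.succ) :=
      hCclique (hzC _) (hzC _) (fun hh => hcs (hzinj hh))
    obtain ⟨M, hM⟩ := exists_maxclique (clique3 ha hb hd)
    exact ⟨M, hM (by simp), hM (by simp), hM (by simp)⟩
  choose M hM1 hM2 hM3 using hMex
  have hrule : ∀ (k : Fin (2*t+2)) (w : V), w ∈ Cset → w ∈ (M k).1 →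
      w = z k.castSucc ∨ w = z k.succ := by
    intro k w hwC hwM
    have hne : z' k ≠ w := by
      rcases hwC with hw4 | ⟨m, _, _, hm⟩
      · have hwP : w ∈ P' := by
          simp only [Set.mem_insert_iff, Set.mem_singleton_iff] at hw4
          rcases hw4 with rfl | rfl | rfl | rfl
          exacts [hl1P, hl2P, hr1P, hr2P]
        exact fun h => hZP _ (hz'Z k) (h ▸ hwP)
      · rw [← hm]; exact hz'_ne_z k m
    have hAdj : G.Adj (z' k) w := clique_adj (hM1 k) hwM hne
    exact (hz'adj k w (Or.inr hwC)).mp hAdj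
  have hconf_above : ∀ k m : Fin (2*t+2), (k : ℕ) < (m : ℕ) →
      Anc c (M k) W' → Anc c (M m) W' → False := by
    intro k m hkm hk hm
    rcases anc_comparable c hk hm with hc | hc
    · have hmem : M m ∈ Tv G (z k.castSucc) :=
        between_Tv c hk hc hm (hM2 k) (hzW' _)
      rcases hrule m _ (hzC _) hmem with h | h
      · have hval := congrArg Fin.val (hzinj h)
        simp [Fin.val_succ] at hval
        omega
      · have hval := congrArg Fin.val (hzinj h)
        simp [Fin.val_succ] at hval
        omega
    · have hmem : M k ∈ Tv G (z m.succ) :=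
        between_Tv c hm hc hk (hM3 m) (hzW' _)
      rcases hrule k _ (hzC _) hmem with h | h
      · have hval := congrArg Fin.val (hzinj h)
        simp [Fin.val_succ] at hval
        omega
      · have hval := congrArg Fin.val (hzinj h)
        simp [Fin.val_succ] at hval
        omega
  have hconf_below : ∀ k m : Fin (2*t+2), (m : ℕ) = (k : ℕ) + 1 →
      Anc c W' (M k) → Anc c W' (M m) → False := by
    intro k m hkm hk hm
    have hshared : z k.succ = z m.castSucc := by
      congr 1
      apply Fin.ext
      simp [Fin.val_succ]
      omega
    have hMmTv : M m ∈ Tv G (z k.succ) := by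
      show z k.succ ∈ (M m).1
      rw [hshared]; exact hM2 m
    rcases Tv_comparable c (show M k ∈ Tv G (z k.succ) from hM3 k) hMmTv with hc | hc
    · have hmem : M k ∈ Tv G (z m.succ) :=
        between_Tv c hm hk hc (hzW' _) (hM3 m)
      rcases hrule k _ (hzC _) hmem with h | h
      · have hval := congrArg Fin.val (hzinj h)
        simp [Fin.val_succ] at hval
        omega
      · have hval := congrArg Fin.val (hzinj h)
        simp [Fin.val_succ] at hval
        omega
    · have hmem : M m ∈ Tv G (z k.castSucc) :=
        between_Tv c hk hm hc (hzW' _) (hM2 k)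
      rcases hrule m _ (hzC _) hmem with h | h
      · have hval := congrArg Fin.val (hzinj h)
        simp [Fin.val_succ] at hval
        omega
      · have hval := congrArg Fin.val (hzinj h)
        simp [Fin.val_succ] at hval
        omega
  have hcompW' : ∀ k : Fin (2*t+2), Anc c (M k) W' ∨ Anc c W' (M k) :=
    fun k => Tv_comparable c (hM3 k) (show W' ∈ Tv G (z k.succ) from hzW' _)
  rcases Nat.eq_zero_or_pos t with ht0 | htpos
  case inr =>
    have haboveOr : ∀ k m : Fin (2*t+2), (m : ℕ) = (k : ℕ) + 1 →
        Anc c (M k) W' ∨ Anc c (M m) W' := by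
      intro k m hkm
      rcases hcompW' k with h | h
      · exact Or.inl h
      rcases hcompW' m with h2 | h2
      · exact Or.inr h2
      · exact (hconf_below k m hkm h h2).elim
    have hi0 : ((⟨0, by omega⟩ : Fin (2*t+2)) : ℕ) = 0 := rfl
    have hi1 : ((⟨1, by omega⟩ : Fin (2*t+2)) : ℕ) = 1 := rfl
    have hi2 : ((⟨2, by omega⟩ : Fin (2*t+2)) : ℕ) = 2 := rfl
    have hi3 : ((⟨3, by omega⟩ : Fin (2*t+2)) : ℕ) = 3 := rfl
    rcases haboveOr ⟨0, by omega⟩ ⟨1, by omega⟩ (by omega) with hA | hA <;>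
      rcases haboveOr ⟨2, by omega⟩ ⟨3, by omega⟩ (by omega) with hB | hB
    · exact hconf_above _ _ (by omega) hA hB
    · exact hconf_above _ _ (by omega) hA hB
    · exact hconf_above _ _ (by omega) hA hB
    · exact hconf_above _ _ (by omega) hA hB
  case inl =>
  subst ht0
  set k0 : Fin (2*0+2) := ⟨0, by omega⟩ with hk0
  set k1 : Fin (2*0+2) := ⟨1, by omega⟩ with hk1
  have hv0 : (k0 : ℕ) = 0 := rfl
  have hv1 : (k1 : ℕ) = 1 := rfl
  set ζ : V := z ⟨1, by omega⟩ with hζdef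
  have hζZ : ζ ∈ Z := hzZ ⟨1, by omega⟩ (by decide) (by decide)
  have e0 : z k0.castSucc = l1 := by
    have h : k0.castSucc = (0 : Fin (2*0+3)) := rfl
    rw [h, hz0]
  have e1 : z k0.succ = ζ := rfl
  have e2 : z k1.castSucc = ζ := rfl
  have e3 : z k1.succ = r1 := by
    have h : k1.succ = Fin.last (2*0+2) := rfl
    rw [h, hzlast]
  have hζW'mem : ζ ∈ W'.1 := hzW' _
  have hW'W : Anc c W' W := star_anc c hWp hWq hpq hl1p hl1W hr1q hr1W
    (show W' ∈ Tv G l1 from hl1W') (show W' ∈ Tv G r1 from hr1W')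
  have hsib := siblings_incomparable c hWp hWq hpq
  rcases hcompW' k0 with h0 | h0 <;> rcases hcompW' k1 with h1 | h1
  · exact hconf_above k0 k1 (by omega) h0 h1
  · -- h0 : M k0 above; h1 : M k1 below : endgame at v with M k1
    have hζM : ζ ∈ (M k1).1 := by rw [← e2]; exact hM2 k1
    have hr1M : r1 ∈ (M k1).1 := by rw [← e3]; exact hM3 k1
    have hl2M : l2 ∉ (M k1).1 :=
      fun h => hz'_nadj_l2 k1 (clique_adj (hM1 k1) h (hz'_ne_l2 k1))
    have hr2M : r2 ∉ (M k1).1 :=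
      fun h => hz'_nadj_r2 k1 (clique_adj (hM1 k1) h (hz'_ne_r2 k1))
    have hW'q : W' ≠ q := by
      intro h
      have hql1 : l1 ∈ q.1 := h ▸ hl1W'
      rcases Tv_comparable c (show p ∈ Tv G l1 from hl1p) (show q ∈ Tv G l1 from hql1)
        with hc | hc
      · exact hsib.1 hc
      · exact hsib.2 hc
    have hMk1_ne_W : M k1 ≠ W := fun h => hl2M (h ▸ hl2W)
    have hWM : Anc c W (M k1) := by
      rcases Tv_comparable c (show M k1 ∈ Tv G r1 from hr1M) (show W ∈ Tv G r1 from hr1W)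
        with hc | hc
      · exact absurd (between_Tv c hW'W h1 hc (show W' ∈ Tv G l2 from hl2W')
          (show W ∈ Tv G l2 from hl2W)) hl2M
      · exact hc
    have hqM : Anc c q (M k1) := by
      rcases Tv_comparable c (show M k1 ∈ Tv G r1 from hr1M) (show q ∈ Tv G r1 from hr1q)
        with hc | hc
      · exfalso
        rcases (child_anc_iff c hWq).mp hc with h2 | h2
        · exact hMk1_ne_W (anc_antisymm c h2 hWM)
        · exact hr2M (h2 ▸ hr2q)
      · exact hc
    have hqMne : q ≠ M k1 := fun h => hr2M (h ▸ hr2q)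
    refine endgame c hWq hW'W hW'q hζW'mem hζM hqM hqMne hr1M hr2q hr2M hLv
      tail1 h1p ?_ ?_ ?_ hr1v tail2 ?_
    · intro γ hγ hne hmem
      obtain ⟨hP, hWm, hnl1, hnl2, hnr2⟩ := h1cond γ hγ hne
      have hnez' : z' k1 ≠ γ := fun h => hZP _ (hz'Z k1) (h ▸ hP)
      have hAdj := clique_adj (hM1 k1) hmem hnez'
      rcases (hz'adj k1 γ (Or.inl hP)).mp hAdj with h | h
      · rw [e2] at h
        exact hZP _ hζZ (h ▸ hP)
      · rw [e3] at h
        exact hne h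
    · intro γ hγ hne
      exact (h1cond γ hγ hne).2.1
    · intro γ hγ hne
      obtain ⟨hP, hWm, hnl1, hnl2, hnr2⟩ := h1cond γ hγ hne
      constructor
      · intro hAdj
        rcases (hzadjP ⟨1, by omega⟩ (by decide) (by decide) γ hP).mp hAdj
          with h | h | h | h
        · exact hnl1 h
        · exact hnl2 h
        · exact hne h
        · exact hnr2 h
      · exact fun h => hZP _ hζZ (h.symm ▸ hP)
    · intro γ hγ hmem
      obtain ⟨hP, hnr1⟩ := h2cond γ hγ
      have hnez' : z' k1 ≠ γ := fun h => hZP _ (hz'Z k1) (h ▸ hP)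
      have hAdj := clique_adj (hM1 k1) hmem hnez'
      rcases (hz'adj k1 γ (Or.inl hP)).mp hAdj with h | h
      · rw [e2] at h
        exact hZP _ hζZ (h ▸ hP)
      · rw [e3] at h
        exact hnr1 h
  · -- h0 : M k0 below; h1 : M k1 above : endgame at u with M k0
    have hζM : ζ ∈ (M k0).1 := by rw [← e1]; exact hM3 k0
    have hl1M : l1 ∈ (M k0).1 := by rw [← e0]; exact hM2 k0
    have hl2M : l2 ∉ (M k0).1 :=
      fun h => hz'_nadj_l2 k0 (clique_adj (hM1 k0) h (hz'_ne_l2 k0))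
    have hr2M : r2 ∉ (M k0).1 :=
      fun h => hz'_nadj_r2 k0 (clique_adj (hM1 k0) h (hz'_ne_r2 k0))
    have hW'p : W' ≠ p := by
      intro h
      have hpr1 : r1 ∈ p.1 := h ▸ hr1W'
      rcases Tv_comparable c (show p ∈ Tv G r1 from hpr1) (show q ∈ Tv G r1 from hr1q)
        with hc | hc
      · exact hsib.1 hc
      · exact hsib.2 hc
    have hMk0_ne_W : M k0 ≠ W := fun h => hl2M (h ▸ hl2W)
    have hWM : Anc c W (M k0) := by
      rcases Tv_comparable c (show M k0 ∈ Tv G l1 from hl1M) (show W ∈ Tv G l1 from hl1W)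
        with hc | hc
      · exact absurd (between_Tv c hW'W h0 hc (show W' ∈ Tv G r2 from hr2W')
          (show W ∈ Tv G r2 from hr2W)) hr2M
      · exact hc
    have hpM : Anc c p (M k0) := by
      rcases Tv_comparable c (show M k0 ∈ Tv G l1 from hl1M) (show p ∈ Tv G l1 from hl1p)
        with hc | hc
      · exfalso
        rcases (child_anc_iff c hWp).mp hc with h2 | h2
        · exact hMk0_ne_W (anc_antisymm c h2 hWM)
        · exact hl2M (h2 ▸ hl2p)
      · exact hc
    have hpMne : p ≠ M k0 := fun h => hl2M (h ▸ hl2p)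
    refine endgame c hWp hW'W hW'p hζW'mem hζM hpM hpMne hl1M hl2p hl2M hLu
      tail3 h3p ?_ ?_ ?_ hl1u tail4 ?_
    · intro γ hγ hne hmem
      obtain ⟨hP, hWm, hnr1, hnr2, hnl2⟩ := h3cond γ hγ hne
      have hnez' : z' k0 ≠ γ := fun h => hZP _ (hz'Z k0) (h ▸ hP)
      have hAdj := clique_adj (hM1 k0) hmem hnez'
      rcases (hz'adj k0 γ (Or.inl hP)).mp hAdj with h | h
      · rw [e0] at h
        exact hne h
      · rw [e1] at h
        exact hZP _ hζZ (h ▸ hP)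
    · intro γ hγ hne
      exact (h3cond γ hγ hne).2.1
    · intro γ hγ hne
      obtain ⟨hP, hWm, hnr1, hnr2, hnl2⟩ := h3cond γ hγ hne
      constructor
      · intro hAdj
        rcases (hzadjP ⟨1, by omega⟩ (by decide) (by decide) γ hP).mp hAdj
          with h | h | h | h
        · exact hne h
        · exact hnl2 h
        · exact hnr1 h
        · exact hnr2 h
      · exact fun h => hZP _ hζZ (h.symm ▸ hP)
    · intro γ hγ hmem
      obtain ⟨hP, hnl1⟩ := h4cond γ hγ
      have hnez' : z' k0 ≠ γ := fun h => hZP _ (hz'Z k0) (h ▸ hP)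
      have hAdj := clique_adj (hM1 k0) hmem hnez'
      rcases (hz'adj k0 γ (Or.inl hP)).mp hAdj with h | h
      · rw [e0] at h
        exact hnl1 h
      · rw [e1] at h
        exact hZP _ hζZ (h ▸ hP)
  · exact hconf_below k0 k1 (by omega) h0 h1

end RPGaux
namespace RPGaux
open SimpleGraph Walk

attribute [local instance] Classical.propDecidable
set_option linter.unusedSectionVars false
set_option linter.unusedVariables false

variable {V : Type*} [Fintype V] {G : SimpleGraph V}

lemma chordless_adj_succ {n : ℕ} {x : Fin (n+1) → V} (hx : IsChordlessPathFun G x)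
    {i : ℕ} (h : i + 1 < n + 1) :
    G.Adj (x ⟨i, by omega⟩) (x ⟨i+1, h⟩) := by
  refine (hx.2 ⟨i, by omega⟩ ⟨i+1, h⟩ ?_).mpr rfl
  rw [Fin.lt_def]
  simp

lemma chordless_consec {n : ℕ} {x : Fin (n+1) → V} (hx : IsChordlessPathFun G x)
    {i j : ℕ} (hi : i < n+1) (hj : j < n+1)
    (hadj : G.Adj (x ⟨i, hi⟩) (x ⟨j, hj⟩)) : j = i + 1 ∨ i = j + 1 := by
  rcases lt_trichotomy i j with h | h | h
  · left
    exact (hx.2 ⟨i, hi⟩ ⟨j, hj⟩ (by rw [Fin.lt_def]; exact h)).mp hadj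
  · exfalso
    subst h
    simp at hadj
  · right
    exact (hx.2 ⟨j, hj⟩ ⟨i, hi⟩ (by rw [Fin.lt_def]; exact h)).mp hadj.symm

lemma seg_walk {n : ℕ} {x : Fin (n+1) → V} (hx : IsChordlessPathFun G x)
    (a : ℕ) (ha : a < n+1) :
    ∀ b : ℕ, a ≤ b → ∀ (hb : b < n+1),
    ∃ w : G.Walk (x ⟨a, ha⟩) (x ⟨b, hb⟩),
      ∀ γ ∈ w.support, ∃ m, a ≤ m ∧ m ≤ b ∧ ∃ (hm : m < n+1), γ = x ⟨m, hm⟩ := by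
  intro b hab
  induction b, hab using Nat.le_induction with
  | base =>
    intro hb
    refine ⟨Walk.nil, ?_⟩
    intro γ hγ
    rw [Walk.support_nil, List.mem_singleton] at hγ
    exact ⟨a, le_refl a, le_refl a, ha, hγ⟩
  | succ b hab ih =>
    intro hb
    obtain ⟨w, hw⟩ := ih (by omega)
    refine ⟨w.concat (chordless_adj_succ hx hb), ?_⟩
    intro γ hγ
    rw [Walk.support_concat, List.mem_append, List.mem_singleton] at hγ
    rcases hγ with hγ | hγ
    · obtain ⟨m, h1, h2, h3, h4⟩ := hw γ hγ
      exact ⟨m, h1, by omega, h3, h4⟩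
    · exact ⟨b+1, by omega, le_refl _, hb, hγ⟩

lemma seg_path {n : ℕ} {x : Fin (n+1) → V} (hx : IsChordlessPathFun G x)
    (a b : ℕ) (ha : a < n+1) (hab : a ≤ b) (hb : b < n+1) :
    ∃ w : G.Walk (x ⟨a, ha⟩) (x ⟨b, hb⟩), w.IsPath ∧
      ∀ γ ∈ w.support, ∃ m, a ≤ m ∧ m ≤ b ∧ ∃ (hm : m < n+1), γ = x ⟨m, hm⟩ := by
  obtain ⟨w, hw⟩ := seg_walk hx a ha b hab hb
  exact ⟨w.bypass, w.bypass_isPath, fun γ hγ => hw γ (w.support_bypass_subset hγ)⟩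

end RPGaux
namespace RPGaux
open SimpleGraph Walk

attribute [local instance] Classical.propDecidable
set_option linter.unusedSectionVars false

variable {V : Type*} [Fintype V] {G : SimpleGraph V} (c : CliqueRPT G)

/-- Comparability of the subtrees of `u` and `v`. -/
def Comp (u v : V) : Prop :=
  ∃ X ∈ Tv G u, ∃ Y ∈ Tv G v, Anc c X Y ∨ Anc c Y X

lemma comp_of_common_neighbor {u v w : V} (h1 : G.Adj u w) (h2 : G.Adj v w) :
    Comp c u v := by
  obtain ⟨X, hXu, hXw⟩ := exists_maxclique_pair h1
  obtain ⟨Y, hYv, hYw⟩ := exists_maxclique_pair h2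
  exact ⟨X, hXu, Y, hYv, Tv_comparable c hXw hYw⟩

noncomputable def mdep (γ : V) : ℕ := sInf {n | ∃ Q ∈ Tv G γ, (rootPath c Q).length = n}

lemma mdep_le {γ : V} {Q : MaxClique G} (hQ : Q ∈ Tv G γ) :
    mdep c γ ≤ (rootPath c Q).length := Nat.sInf_le ⟨Q, hQ, rfl⟩

lemma mdep_attained (γ : V) : ∃ Q ∈ Tv G γ, (rootPath c Q).length = mdep c γ := by
  have hne : {n | ∃ Q ∈ Tv G γ, (rootPath c Q).length = n}.Nonempty := by
    obtain ⟨Q, hQ⟩ := Tv_nonempty (G := G) γ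
    exact ⟨_, Q, hQ, rfl⟩
  exact Nat.sInf_mem hne

lemma key_dir {t o z : V} (X : MaxClique G) (hXt : t ∈ X.1) (Y : MaxClique G) (hYo : o ∈ Y.1)
    (hanc : Anc c X Y)
    (w1 : G.Walk o z) (hw1 : ∀ x ∈ w1.support, x ≠ t ∧ ¬ G.Adj t x)
    (htz : t ≠ z) (hadj_tz : ¬ G.Adj t z) :
    mdep c t < mdep c z := by
  obtain ⟨R, hR, hRlen⟩ := mdep_attained c z
  have hXnot : X ∉ (pathBtw c Y R).support := fun hmem => (lemG c w1 hw1 hYo hR _ hmem) hXt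
  have hAncXR : Anc c X R := anc_walk c (pathBtw c Y R) hanc hXnot
  have hXR : X ≠ R := by
    rintro rfl
    exact hadj_tz (clique_adj hXt hR htz)
  have h1 := anc_length_lt c hAncXR hXR
  have h2 := mdep_le c (show X ∈ Tv G t from hXt)
  omega

/-- All the asteroidal-triple facts about the pair `(u,v)` with third vertex `z`. -/
def PD (G : SimpleGraph V) (u v z : V) : Prop :=
  u ≠ v ∧ ¬G.Adj u v ∧ u ≠ z ∧ ¬G.Adj u z ∧ v ≠ z ∧ ¬G.Adj v z ∧
  (∃ w1 : G.Walk v z, ∀ x ∈ w1.support, x ≠ u ∧ ¬ G.Adj u x) ∧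
  (∃ w2 : G.Walk u z, ∀ x ∈ w2.support, x ≠ v ∧ ¬ G.Adj v x)

lemma AT_pd_12 {p q r : V} (h : IsAsteroidalTriple G p q r) : PD G p q r := by
  obtain ⟨h1, h2, h3, h4, h5, h6, hw1, hw2, hw3⟩ := h
  exact ⟨h1, h4, h3, h6, h2, h5, hw2, hw3⟩

lemma AT_pd_23 {p q r : V} (h : IsAsteroidalTriple G p q r) : PD G q r p := by
  obtain ⟨h1, h2, h3, h4, h5, h6, ⟨w1, hw1⟩, ⟨w2, hw2⟩, ⟨w3, hw3⟩⟩ := h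
  refine ⟨h2, h5, h1.symm, fun ha => h4 ha.symm, h3.symm, fun ha => h6 ha.symm, ?_, ?_⟩
  · exact ⟨w3.reverse, fun x hx => hw3 x (by rwa [Walk.support_reverse, List.mem_reverse] at hx)⟩
  · exact ⟨w1.reverse, fun x hx => hw1 x (by rwa [Walk.support_reverse, List.mem_reverse] at hx)⟩

lemma AT_pd_13 {p q r : V} (h : IsAsteroidalTriple G p q r) : PD G p r q := by
  obtain ⟨h1, h2, h3, h4, h5, h6, ⟨w1, hw1⟩, ⟨w2, hw2⟩, ⟨w3, hw3⟩⟩ := h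
  refine ⟨h3, h6, h1, h4, h2.symm, fun ha => h5 ha.symm, ?_, ⟨w1, hw1⟩⟩
  exact ⟨w2.reverse, fun x hx => hw2 x (by rwa [Walk.support_reverse, List.mem_reverse] at hx)⟩

end RPGaux
namespace RPGaux
open SimpleGraph Walk

attribute [local instance] Classical.propDecidable
set_option linter.unusedSectionVars false
set_option linter.unusedVariables false
set_option maxHeartbeats 2000000

variable {V : Type*} [Fintype V] {G : SimpleGraph V} (c : CliqueRPT G)

lemma monster_comp {u v : V} (huv : u ≠ v) (hnadj : ¬ G.Adj u v)
    {r s : ℕ} (hr : 2 ≤ r) (hs : 2 ≤ s)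
    {x : Fin (r+2) → V} {y : Fin (s+2) → V} {Z : Set V}
    (hx0 : x 0 = u) (hxl : x (Fin.last (r+1)) = v)
    (hy0 : y 0 = u) (hyl : y (Fin.last (s+1)) = v)
    (hcx : IsChordlessPathFun G x) (hcy : IsChordlessPathFun G y)
    (hxy : ∀ i : Fin (r+2), i ≠ 0 → i ≠ Fin.last (r+1) →
      ∀ j : Fin (s+2), j ≠ 0 → j ≠ Fin.last (s+1) → x i ≠ y j)
    (hZ : Z ∩ (Set.range x ∪ Set.range y) = ∅)
    (hsq : ∀ i j : ℕ, ∀ _hi1 : 1 ≤ i, ∀ _hi2 : i + 1 ≤ r, ∀ _hj1 : 1 ≤ j, ∀ _hj2 : j + 1 ≤ s,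
        G.Adj (x ⟨i, by omega⟩) (y ⟨j, by omega⟩) →
        G.Adj (x ⟨i, by omega⟩) (y ⟨j+1, by omega⟩) →
        G.Adj (x ⟨i+1, by omega⟩) (y ⟨j, by omega⟩) →
        G.Adj (x ⟨i+1, by omega⟩) (y ⟨j+1, by omega⟩) →
        ∃ l1 l2 r1 r2 : V,
          ((l1 = x ⟨i, by omega⟩ ∧ l2 = y ⟨j, by omega⟩) ∨
           (l1 = y ⟨j, by omega⟩ ∧ l2 = x ⟨i, by omega⟩)) ∧
          ((r1 = x ⟨i+1, by omega⟩ ∧ r2 = y ⟨j+1, by omega⟩) ∨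
           (r1 = y ⟨j+1, by omega⟩ ∧ r2 = x ⟨i+1, by omega⟩)) ∧
          (Attach1 G Z l1 l2 r1 r2 ∨
           Attach2 G Z (Set.range x ∪ Set.range y) l1 l2 r1 r2)) :
    Comp c u v := by
  by_contra hncomp
  -- basic facts
  have hZP : ∀ a ∈ Z, a ∉ (Set.range x ∪ Set.range y) := by
    intro a ha hmem
    have : a ∈ Z ∩ (Set.range x ∪ Set.range y) := ⟨ha, hmem⟩
    rw [hZ] at this
    exact this
  have hx0' : x ⟨0, by omega⟩ = u := hx0
  have hxl' : x ⟨r+1, by omega⟩ = v := hxl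
  have hy0' : y ⟨0, by omega⟩ = u := hy0
  have hyl' : y ⟨s+1, by omega⟩ = v := hyl
  have hxne : ∀ (m m' : ℕ) (hm : m < r+2) (hm' : m' < r+2), m ≠ m' →
      x ⟨m, hm⟩ ≠ x ⟨m', hm'⟩ := by
    intro m m' hm hm' hne he
    exact hne (by have := congrArg Fin.val (hcx.1 he); simpa using this)
  have hyne : ∀ (m m' : ℕ) (hm : m < s+2) (hm' : m' < s+2), m ≠ m' →
      y ⟨m, hm⟩ ≠ y ⟨m', hm'⟩ := by
    intro m m' hm hm' hne he
    exact hne (by have := congrArg Fin.val (hcy.1 he); simpa using this)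
  have hxy' : ∀ (a : ℕ) (ha1 : 1 ≤ a) (ha2 : a ≤ r) (ha : a < r+2)
      (b : ℕ) (hb1 : 1 ≤ b) (hb2 : b ≤ s) (hb : b < s+2), x ⟨a, ha⟩ ≠ y ⟨b, hb⟩ := by
    intro a ha1 ha2 ha b hb1 hb2 hb
    refine hxy ⟨a, ha⟩ ?_ ?_ ⟨b, hb⟩ ?_ ?_ <;>
      (intro h; have := congrArg Fin.val h; simp [Fin.last] at this; omega)
  -- u and v versus interior vertices
  have hu_ne_xint : ∀ (a : ℕ) (ha1 : 1 ≤ a) (ha : a < r+2), u ≠ x ⟨a, ha⟩ := by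
    intro a ha1 ha h
    rw [← hx0'] at h
    exact hxne 0 a (by omega) ha (by omega) h
  have hv_ne_xint : ∀ (a : ℕ) (ha2 : a ≤ r) (ha : a < r+2), v ≠ x ⟨a, ha⟩ := by
    intro a ha2 ha h
    rw [← hxl'] at h
    exact hxne (r+1) a (by omega) ha (by omega) h
  have hu_ne_yint : ∀ (b : ℕ) (hb1 : 1 ≤ b) (hb : b < s+2), u ≠ y ⟨b, hb⟩ := by
    intro b hb1 hb h
    rw [← hy0'] at h
    exact hyne 0 b (by omega) hb (by omega) h
  have hv_ne_yint : ∀ (b : ℕ) (hb2 : b ≤ s) (hb : b < s+2), v ≠ y ⟨b, hb⟩ := by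
    intro b hb2 hb h
    rw [← hyl'] at h
    exact hyne (s+1) b (by omega) hb (by omega) h
  -- the cliques of u and v and the top
  obtain ⟨Qu, hQu⟩ := Tv_nonempty (G := G) u
  obtain ⟨Qv, hQv⟩ := Tv_nonempty (G := G) v
  set S : Set ℕ := {n | ∃ X, Anc c X Qu ∧ Anc c X Qv ∧ (rootPath c X).length = n} with hSdef
  have hSne : S.Nonempty := ⟨_, c.root, anc_root c _, anc_root c _, rfl⟩
  have hSbdd : BddAbove S := by
    refine ⟨(rootPath c Qu).length, ?_⟩
    rintro n ⟨X, h1, h2, h3⟩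
    rw [← h3]
    exact anc_length_le c h1
  obtain ⟨W, hWQu, hWQv, hWlen⟩ : sSup S ∈ S := Nat.sSup_mem hSne hSbdd
  have hWmax : ∀ X, Anc c X Qu → Anc c X Qv →
      (rootPath c X).length ≤ (rootPath c W).length := by
    intro X h1 h2
    rw [hWlen]
    exact le_csSup hSbdd ⟨X, h1, h2, rfl⟩
  have hWQune : W ≠ Qu := by
    intro h
    rw [h] at hWQv
    exact hncomp ⟨Qu, hQu, Qv, hQv, Or.inl hWQv⟩
  have hWQvne : W ≠ Qv := by
    intro h
    rw [h] at hWQu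
    exact hncomp ⟨Qu, hQu, Qv, hQv, Or.inr hWQu⟩
  -- the two children p and q
  obtain ⟨p, hWpadj, restu, hrestu⟩ :=
    Walk.exists_eq_cons_of_ne hWQune ((rootPath c Qu).dropUntil W hWQu)
  obtain ⟨q, hWqadj, restv, hrestv⟩ :=
    Walk.exists_eq_cons_of_ne hWQvne ((rootPath c Qv).dropUntil W hWQv)
  have hpdrop : p ∈ ((rootPath c Qu).dropUntil W hWQu).support := by
    rw [hrestu, Walk.support_cons]
    exact List.mem_cons_of_mem _ (Walk.start_mem_support _)
  have hqdrop : q ∈ ((rootPath c Qv).dropUntil W hWQv).support := by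
    rw [hrestv, Walk.support_cons]
    exact List.mem_cons_of_mem _ (Walk.start_mem_support _)
  have hpQu : Anc c p Qu := Walk.support_dropUntil_subset _ _ hpdrop
  have hqQv : Anc c q Qv := Walk.support_dropUntil_subset _ _ hqdrop
  have hWp : IsChild c W p := ⟨hWpadj, mem_dropUntil_anc c hWQu hpdrop⟩
  have hWq : IsChild c W q := ⟨hWqadj, mem_dropUntil_anc c hWQv hqdrop⟩
  have hplen := child_length c hWp
  have hqlen := child_length c hWq
  have hpQv : ¬ Anc c p Qv := by
    intro h
    have := hWmax p hpQu h
    omega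
  have hqQu : ¬ Anc c q Qu := by
    intro h
    have := hWmax q h hqQv
    omega
  have hpq : p ≠ q := by
    rintro rfl
    exact hpQv hqQv
  have hsib := siblings_incomparable c hWp hWq hpq
  -- all cliques of u are below p
  have hLu : ∀ X ∈ Tv G u, Anc c p X := by
    intro X hX
    rcases Tv_comparable c hX hQu with hXQ | hXQ
    · rcases anc_comparable c hXQ hpQu with hc | hc
      · rcases (child_anc_iff c hWp).mp hc with h2 | h2
        · exact absurd ⟨X, hX, Qv, hQv, Or.inl (anc_trans c h2 hWQv)⟩ hncomp
        · rw [h2]; exact anc_self c p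
      · exact hc
    · exact anc_trans c hpQu hXQ
  have hLv : ∀ Y ∈ Tv G v, Anc c q Y := by
    intro Y hY
    rcases Tv_comparable c hY hQv with hYQ | hYQ
    · rcases anc_comparable c hYQ hqQv with hc | hc
      · rcases (child_anc_iff c hWq).mp hc with h2 | h2
        · exact absurd ⟨Qu, hQu, Y, hY, Or.inr (anc_trans c h2 hWQu)⟩ hncomp
        · rw [h2]; exact anc_self c q
      · exact hc
    · exact anc_trans c hqQv hYQ
  have hSideu : ∀ X ∈ Tv G u, ¬ Anc c q X := by
    intro X hX h
    rcases anc_comparable c (hLu X hX) h with hc | hc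
    · exact hsib.1 hc
    · exact hsib.2 hc
  have hSidev : ∀ Y ∈ Tv G v, ¬ Anc c p Y := by
    intro Y hY h
    rcases anc_comparable c h (hLv Y hY) with hc | hc
    · exact hsib.1 hc
    · exact hsib.2 hc
  have hWnu : u ∉ W.1 := by
    intro h
    have h2 := hLu W h
    exact hWp.1.ne (anc_antisymm c hWp.2 h2)
  have hWnv : v ∉ W.1 := by
    intro h
    have h2 := hLv W h
    exact hWq.1.ne (anc_antisymm c hWq.2 h2)
  -- endpoints as mk
  have hx_u : ∀ (h : (0:ℕ) < r+2), x ⟨0, h⟩ = u := fun _ => hx0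
  have hx_v : ∀ (h : r+1 < r+2), x ⟨r+1, h⟩ = v := fun _ => hxl
  have hy_u : ∀ (h : (0:ℕ) < s+2), y ⟨0, h⟩ = u := fun _ => hy0
  have hy_v : ∀ (h : s+1 < s+2), y ⟨s+1, h⟩ = v := fun _ => hyl
  -- crossing of the x-path
  obtain ⟨wx, hwxP, hwxS⟩ := seg_path hcx 0 (r+1) (by omega) (by omega) (by omega)
  obtain ⟨ξ, hξmem, hξW, hξp⟩ :=
    SEP c hWp ((wx.copy (hx_u (by omega)) (hx_v (by omega))).reverse) Qv hQv hpQv Qu hQu hpQu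
  rw [Walk.support_reverse, List.mem_reverse, Walk.support_copy] at hξmem
  obtain ⟨mp, hmp0, hmpr, hmplt, rfl⟩ := hwxS ξ hξmem
  obtain ⟨ξ', hξ'mem, hξ'W, hξ'q⟩ :=
    SEP c hWq (wx.copy (hx_u (by omega)) (hx_v (by omega))) Qu hQu hqQu Qv hQv hqQv
  rw [Walk.support_copy] at hξ'mem
  obtain ⟨mq, hmq0, hmqr, hmqlt, rfl⟩ := hwxS ξ' hξ'mem
  have hmp1 : 1 ≤ mp := by
    by_contra h
    have h0 : mp = 0 := by omega
    subst h0
    exact hWnu ((hx_u hmplt) ▸ hξW)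
  have hmp2 : mp ≤ r := by
    by_contra h
    have h0 : mp = r+1 := by omega
    subst h0
    exact hWnv ((hx_v hmplt) ▸ hξW)
  have hmq1 : 1 ≤ mq := by
    by_contra h
    have h0 : mq = 0 := by omega
    subst h0
    exact hWnu ((hx_u hmqlt) ▸ hξ'W)
  have hmq2 : mq ≤ r := by
    by_contra h
    have h0 : mq = r+1 := by omega
    subst h0
    exact hWnv ((hx_v hmqlt) ▸ hξ'W)
  have hmpq : mp ≠ mq := by
    intro h
    subst h
    rcases Tv_comparable c (show p ∈ Tv G (x ⟨mp, hmplt⟩) from hξp)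
      (show q ∈ Tv G (x ⟨mp, hmplt⟩) from hξ'q) with hc | hc
    · exact hsib.1 hc
    · exact hsib.2 hc
  have hconsec : mq = mp + 1 ∨ mp = mq + 1 :=
    chordless_consec hcx _ _ (clique_adj hξW hξ'W (hxne mp mq _ _ hmpq))
  have hWx : ∀ (m : ℕ) (hm : m < r+2), x ⟨m, hm⟩ ∈ W.1 → m = mp ∨ m = mq := by
    intro m hm hmW
    by_contra hcon
    push_neg at hcon
    have hc1 := chordless_consec hcx hm hmplt (clique_adj hmW hξW (hxne m mp _ _ hcon.1))
    have hc2 := chordless_consec hcx hm hmqlt (clique_adj hmW hξ'W (hxne m mq _ _ hcon.2))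
    omega
  have hlt : mp < mq := by
    by_contra hge
    push_neg at hge
    obtain ⟨wpre, hwpreP, hwpreS⟩ := seg_path hcx 0 mq (by omega) (by omega) (by omega)
    obtain ⟨η, hηmem, hηW, hηp⟩ :=
      SEP c hWp ((wpre.copy (hx_u (by omega)) rfl).reverse)
        q (show q ∈ Tv G (x ⟨mq, hmqlt⟩) from hξ'q) hsib.1 Qu hQu hpQu
    rw [Walk.support_reverse, List.mem_reverse, Walk.support_copy] at hηmem
    obtain ⟨m, hm0, hmm, hmlt, rfl⟩ := hwpreS η hηmem
    rcases hWx m hmlt hηW with h | h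
    · omega
    · subst h
      rcases Tv_comparable c (show p ∈ Tv G (x ⟨m, hmlt⟩) from hηp)
        (show q ∈ Tv G (x ⟨m, hmlt⟩) from hξ'q) with hc | hc
      · exact hsib.1 hc
      · exact hsib.2 hc
  have hmq_eq : mq = mp + 1 := by omega
  subst hmq_eq
  -- crossing of the y-path
  obtain ⟨wy, hwyP, hwyS⟩ := seg_path hcy 0 (s+1) (by omega) (by omega) (by omega)
  obtain ⟨ρ, hρmem, hρW, hρp⟩ :=
    SEP c hWp ((wy.copy (hy_u (by omega)) (hy_v (by omega))).reverse) Qv hQv hpQv Qu hQu hpQu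
  rw [Walk.support_reverse, List.mem_reverse, Walk.support_copy] at hρmem
  obtain ⟨jp, hjp0, hjpr, hjplt, rfl⟩ := hwyS ρ hρmem
  obtain ⟨ρ', hρ'mem, hρ'W, hρ'q⟩ :=
    SEP c hWq (wy.copy (hy_u (by omega)) (hy_v (by omega))) Qu hQu hqQu Qv hQv hqQv
  rw [Walk.support_copy] at hρ'mem
  obtain ⟨jq, hjq0, hjqr, hjqlt, rfl⟩ := hwyS ρ' hρ'mem
  have hjp1 : 1 ≤ jp := by
    by_contra h
    have h0 : jp = 0 := by omega
    subst h0
    exact hWnu ((hy_u hjplt) ▸ hρW)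
  have hjp2 : jp ≤ s := by
    by_contra h
    have h0 : jp = s+1 := by omega
    subst h0
    exact hWnv ((hy_v hjplt) ▸ hρW)
  have hjq1 : 1 ≤ jq := by
    by_contra h
    have h0 : jq = 0 := by omega
    subst h0
    exact hWnu ((hy_u hjqlt) ▸ hρ'W)
  have hjq2 : jq ≤ s := by
    by_contra h
    have h0 : jq = s+1 := by omega
    subst h0
    exact hWnv ((hy_v hjqlt) ▸ hρ'W)
  have hjpq : jp ≠ jq := by
    intro h
    subst h
    rcases Tv_comparable c (show p ∈ Tv G (y ⟨jp, hjplt⟩) from hρp)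
      (show q ∈ Tv G (y ⟨jp, hjplt⟩) from hρ'q) with hc | hc
    · exact hsib.1 hc
    · exact hsib.2 hc
  have hjconsec : jq = jp + 1 ∨ jp = jq + 1 :=
    chordless_consec hcy _ _ (clique_adj hρW hρ'W (hyne jp jq _ _ hjpq))
  have hWy : ∀ (m : ℕ) (hm : m < s+2), y ⟨m, hm⟩ ∈ W.1 → m = jp ∨ m = jq := by
    intro m hm hmW
    by_contra hcon
    push_neg at hcon
    have hc1 := chordless_consec hcy hm hjplt (clique_adj hmW hρW (hyne m jp _ _ hcon.1))
    have hc2 := chordless_consec hcy hm hjqlt (clique_adj hmW hρ'W (hyne m jq _ _ hcon.2))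
    omega
  have hjlt : jp < jq := by
    by_contra hge
    push_neg at hge
    obtain ⟨wpre, hwpreP, hwpreS⟩ := seg_path hcy 0 jq (by omega) (by omega) (by omega)
    obtain ⟨η, hηmem, hηW, hηp⟩ :=
      SEP c hWp ((wpre.copy (hy_u (by omega)) rfl).reverse)
        q (show q ∈ Tv G (y ⟨jq, hjqlt⟩) from hρ'q) hsib.1 Qu hQu hpQu
    rw [Walk.support_reverse, List.mem_reverse, Walk.support_copy] at hηmem
    obtain ⟨m, hm0, hmm, hmlt, rfl⟩ := hwpreS η hηmem
    rcases hWy m hmlt hηW with h | h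
    · omega
    · subst h
      rcases Tv_comparable c (show p ∈ Tv G (y ⟨m, hmlt⟩) from hηp)
        (show q ∈ Tv G (y ⟨m, hmlt⟩) from hρ'q) with hc | hc
      · exact hsib.1 hc
      · exact hsib.2 hc
  have hjq_eq : jq = jp + 1 := by omega
  subst hjq_eq
  -- memberships in the path set
  have hxP : ∀ (m : ℕ) (hm : m < r+2), x ⟨m, hm⟩ ∈ Set.range x ∪ Set.range y :=
    fun m hm => Or.inl ⟨⟨m, hm⟩, rfl⟩
  have hyP : ∀ (m : ℕ) (hm : m < s+2), y ⟨m, hm⟩ ∈ Set.range x ∪ Set.range y :=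
    fun m hm => Or.inr ⟨⟨m, hm⟩, rfl⟩
  -- distinctness of the four corners
  have d1 : x ⟨mp, hmplt⟩ ≠ y ⟨jp, hjplt⟩ := hxy' mp hmp1 hmp2 _ jp hjp1 hjp2 _
  have d2 : x ⟨mp, hmplt⟩ ≠ x ⟨mp+1, hmqlt⟩ := hxne _ _ _ _ (by omega)
  have d3 : x ⟨mp, hmplt⟩ ≠ y ⟨jp+1, hjqlt⟩ := hxy' mp hmp1 hmp2 _ (jp+1) (by omega) hjq2 _
  have d4 : y ⟨jp, hjplt⟩ ≠ x ⟨mp+1, hmqlt⟩ :=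
    (hxy' (mp+1) (by omega) hmq2 _ jp hjp1 hjp2 _).symm
  have d5 : y ⟨jp, hjplt⟩ ≠ y ⟨jp+1, hjqlt⟩ := hyne _ _ _ _ (by omega)
  have d6 : x ⟨mp+1, hmqlt⟩ ≠ y ⟨jp+1, hjqlt⟩ :=
    hxy' (mp+1) (by omega) hmq2 _ (jp+1) (by omega) hjq2 _
  -- endpoint inequalities
  have hBv : x ⟨mp+1, hmqlt⟩ ≠ v := (hv_ne_xint (mp+1) hmq2 _).symm
  have hDv : y ⟨jp+1, hjqlt⟩ ≠ v := (hv_ne_yint (jp+1) hjq2 _).symm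
  have hAu : x ⟨mp, hmplt⟩ ≠ u := (hu_ne_xint mp hmp1 _).symm
  have hCu : y ⟨jp, hjplt⟩ ≠ u := (hu_ne_yint jp hjp1 _).symm
  -- the four tails
  obtain ⟨xtv0, hxtvP0, hxtvS⟩ := seg_path hcx (mp+1) (r+1) (by omega) (by omega) (by omega)
  obtain ⟨ytv0, hytvP0, hytvS⟩ := seg_path hcy (jp+1) (s+1) (by omega) (by omega) (by omega)
  obtain ⟨xhu0, hxhuP0, hxhuS⟩ := seg_path hcx 0 mp (by omega) (by omega) (by omega)
  obtain ⟨yhu0, hyhuP0, hyhuS⟩ := seg_path hcy 0 jp (by omega) (by omega) (by omega)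
  have hxtvP : (xtv0.copy rfl (hx_v (by omega))).IsPath := by
    rw [Walk.isPath_copy]; exact hxtvP0
  have hytvP : (ytv0.copy rfl (hy_v (by omega))).IsPath := by
    rw [Walk.isPath_copy]; exact hytvP0
  have hxhuP : ((xhu0.copy (hx_u (by omega)) rfl).reverse).IsPath := by
    apply Walk.IsPath.reverse
    rw [Walk.isPath_copy]; exact hxhuP0
  have hyhuP : ((yhu0.copy (hy_u (by omega)) rfl).reverse).IsPath := by
    apply Walk.IsPath.reverse
    rw [Walk.isPath_copy]; exact hyhuP0
  -- masters for the x-tail towards v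
  have Mxv : ∀ γ ∈ (xtv0.copy rfl (hx_v (by omega))).support, γ ≠ x ⟨mp+1, hmqlt⟩ →
      γ ∈ Set.range x ∪ Set.range y ∧ γ ∉ W.1 ∧ γ ≠ x ⟨mp, hmplt⟩ ∧
      γ ≠ y ⟨jp, hjplt⟩ ∧ γ ≠ y ⟨jp+1, hjqlt⟩ := by
    intro γ hγ hne
    rw [Walk.support_copy] at hγ
    obtain ⟨m, hm1, hm2, hmlt, rfl⟩ := hxtvS γ hγ
    have hm1' : mp + 2 ≤ m := by
      rcases Nat.eq_or_lt_of_le hm1 with h | h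
      · exfalso
        apply hne
        have h' : m = mp + 1 := by omega
        subst h'
        rfl
      · omega
    refine ⟨hxP m hmlt, ?_, hxne m mp _ _ (by omega), ?_, ?_⟩
    · intro hW
      rcases hWx m hmlt hW with h | h <;> omega
    · rcases Nat.lt_or_ge m (r+1) with h | h
      · exact hxy' m (by omega) (by omega) _ jp hjp1 hjp2 _
      · have hmr : m = r+1 := by omega
        subst hmr
        rw [hx_v hmlt]
        exact hv_ne_yint jp hjp2 _
    · rcases Nat.lt_or_ge m (r+1) with h | h
      · exact hxy' m (by omega) (by omega) _ (jp+1) (by omega) hjq2 _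
      · have hmr : m = r+1 := by omega
        subst hmr
        rw [hx_v hmlt]
        exact hv_ne_yint (jp+1) hjq2 _
  have MxvW : ∀ γ ∈ (xtv0.copy rfl (hx_v (by omega))).support,
      γ ∈ Set.range x ∪ Set.range y ∧ γ ≠ y ⟨jp, hjplt⟩ ∧ γ ≠ y ⟨jp+1, hjqlt⟩ := by
    intro γ hγ
    rw [Walk.support_copy] at hγ
    obtain ⟨m, hm1, hm2, hmlt, rfl⟩ := hxtvS γ hγ
    refine ⟨hxP m hmlt, ?_, ?_⟩
    · rcases Nat.lt_or_ge m (r+1) with h | h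
      · exact hxy' m (by omega) (by omega) _ jp hjp1 hjp2 _
      · have hmr : m = r+1 := by omega
        subst hmr
        rw [hx_v hmlt]
        exact hv_ne_yint jp hjp2 _
    · rcases Nat.lt_or_ge m (r+1) with h | h
      · exact hxy' m (by omega) (by omega) _ (jp+1) (by omega) hjq2 _
      · have hmr : m = r+1 := by omega
        subst hmr
        rw [hx_v hmlt]
        exact hv_ne_yint (jp+1) hjq2 _
  have Myv : ∀ γ ∈ (ytv0.copy rfl (hy_v (by omega))).support, γ ≠ y ⟨jp+1, hjqlt⟩ →
      γ ∈ Set.range x ∪ Set.range y ∧ γ ∉ W.1 ∧ γ ≠ y ⟨jp, hjplt⟩ ∧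
      γ ≠ x ⟨mp, hmplt⟩ ∧ γ ≠ x ⟨mp+1, hmqlt⟩ := by
    intro γ hγ hne
    rw [Walk.support_copy] at hγ
    obtain ⟨m, hm1, hm2, hmlt, rfl⟩ := hytvS γ hγ
    have hm1' : jp + 2 ≤ m := by
      rcases Nat.eq_or_lt_of_le hm1 with h | h
      · exfalso
        apply hne
        have h' : m = jp + 1 := by omega
        subst h'
        rfl
      · omega
    refine ⟨hyP m hmlt, ?_, hyne m jp _ _ (by omega), ?_, ?_⟩
    · intro hW
      rcases hWy m hmlt hW with h | h <;> omega
    · rcases Nat.lt_or_ge m (s+1) with h | h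
      · exact (hxy' mp hmp1 hmp2 _ m (by omega) (by omega) _).symm
      · have hmr : m = s+1 := by omega
        subst hmr
        rw [hy_v hmlt]
        exact hv_ne_xint mp hmp2 _
    · rcases Nat.lt_or_ge m (s+1) with h | h
      · exact (hxy' (mp+1) (by omega) hmq2 _ m (by omega) (by omega) _).symm
      · have hmr : m = s+1 := by omega
        subst hmr
        rw [hy_v hmlt]
        exact hv_ne_xint (mp+1) hmq2 _
  have MyvW : ∀ γ ∈ (ytv0.copy rfl (hy_v (by omega))).support,
      γ ∈ Set.range x ∪ Set.range y ∧ γ ≠ x ⟨mp, hmplt⟩ ∧ γ ≠ x ⟨mp+1, hmqlt⟩ := by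
    intro γ hγ
    rw [Walk.support_copy] at hγ
    obtain ⟨m, hm1, hm2, hmlt, rfl⟩ := hytvS γ hγ
    refine ⟨hyP m hmlt, ?_, ?_⟩
    · rcases Nat.lt_or_ge m (s+1) with h | h
      · exact (hxy' mp hmp1 hmp2 _ m (by omega) (by omega) _).symm
      · have hmr : m = s+1 := by omega
        subst hmr
        rw [hy_v hmlt]
        exact hv_ne_xint mp hmp2 _
    · rcases Nat.lt_or_ge m (s+1) with h | h
      · exact (hxy' (mp+1) (by omega) hmq2 _ m (by omega) (by omega) _).symm
      · have hmr : m = s+1 := by omega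
        subst hmr
        rw [hy_v hmlt]
        exact hv_ne_xint (mp+1) hmq2 _
  have Mxu : ∀ γ ∈ ((xhu0.copy (hx_u (by omega)) rfl).reverse).support, γ ≠ x ⟨mp, hmplt⟩ →
      γ ∈ Set.range x ∪ Set.range y ∧ γ ∉ W.1 ∧ γ ≠ x ⟨mp+1, hmqlt⟩ ∧
      γ ≠ y ⟨jp, hjplt⟩ ∧ γ ≠ y ⟨jp+1, hjqlt⟩ := by
    intro γ hγ hne
    rw [Walk.support_reverse, List.mem_reverse, Walk.support_copy] at hγ
    obtain ⟨m, hm1, hm2, hmlt, rfl⟩ := hxhuS γ hγ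
    have hm2' : m < mp := by
      rcases Nat.eq_or_lt_of_le hm2 with h | h
      · exfalso
        apply hne
        subst h
        rfl
      · omega
    refine ⟨hxP m hmlt, ?_, hxne m (mp+1) _ _ (by omega), ?_, ?_⟩
    · intro hW
      rcases hWx m hmlt hW with h | h <;> omega
    · rcases Nat.eq_zero_or_pos m with h | h
      · subst h
        rw [hx_u hmlt]
        exact hu_ne_yint jp hjp1 _
      · exact hxy' m (by omega) (by omega) _ jp hjp1 hjp2 _
    · rcases Nat.eq_zero_or_pos m with h | h
      · subst h
        rw [hx_u hmlt]
        exact hu_ne_yint (jp+1) (by omega) _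
      · exact hxy' m (by omega) (by omega) _ (jp+1) (by omega) hjq2 _
  have MxuW : ∀ γ ∈ ((xhu0.copy (hx_u (by omega)) rfl).reverse).support,
      γ ∈ Set.range x ∪ Set.range y ∧ γ ≠ y ⟨jp, hjplt⟩ ∧ γ ≠ y ⟨jp+1, hjqlt⟩ := by
    intro γ hγ
    rw [Walk.support_reverse, List.mem_reverse, Walk.support_copy] at hγ
    obtain ⟨m, hm1, hm2, hmlt, rfl⟩ := hxhuS γ hγ
    refine ⟨hxP m hmlt, ?_, ?_⟩
    · rcases Nat.eq_zero_or_pos m with h | h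
      · subst h
        rw [hx_u hmlt]
        exact hu_ne_yint jp hjp1 _
      · exact hxy' m (by omega) (by omega) _ jp hjp1 hjp2 _
    · rcases Nat.eq_zero_or_pos m with h | h
      · subst h
        rw [hx_u hmlt]
        exact hu_ne_yint (jp+1) (by omega) _
      · exact hxy' m (by omega) (by omega) _ (jp+1) (by omega) hjq2 _
  have Myu : ∀ γ ∈ ((yhu0.copy (hy_u (by omega)) rfl).reverse).support, γ ≠ y ⟨jp, hjplt⟩ →
      γ ∈ Set.range x ∪ Set.range y ∧ γ ∉ W.1 ∧ γ ≠ y ⟨jp+1, hjqlt⟩ ∧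
      γ ≠ x ⟨mp, hmplt⟩ ∧ γ ≠ x ⟨mp+1, hmqlt⟩ := by
    intro γ hγ hne
    rw [Walk.support_reverse, List.mem_reverse, Walk.support_copy] at hγ
    obtain ⟨m, hm1, hm2, hmlt, rfl⟩ := hyhuS γ hγ
    have hm2' : m < jp := by
      rcases Nat.eq_or_lt_of_le hm2 with h | h
      · exfalso
        apply hne
        subst h
        rfl
      · omega
    refine ⟨hyP m hmlt, ?_, hyne m (jp+1) _ _ (by omega), ?_, ?_⟩
    · intro hW
      rcases hWy m hmlt hW with h | h <;> omega
    · rcases Nat.eq_zero_or_pos m with h | h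
      · subst h
        rw [hy_u hmlt]
        exact hu_ne_xint mp hmp1 _
      · exact (hxy' mp hmp1 hmp2 _ m (by omega) (by omega) _).symm
    · rcases Nat.eq_zero_or_pos m with h | h
      · subst h
        rw [hy_u hmlt]
        exact hu_ne_xint (mp+1) (by omega) _
      · exact (hxy' (mp+1) (by omega) hmq2 _ m (by omega) (by omega) _).symm
  have MyuW : ∀ γ ∈ ((yhu0.copy (hy_u (by omega)) rfl).reverse).support,
      γ ∈ Set.range x ∪ Set.range y ∧ γ ≠ x ⟨mp, hmplt⟩ ∧ γ ≠ x ⟨mp+1, hmqlt⟩ := by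
    intro γ hγ
    rw [Walk.support_reverse, List.mem_reverse, Walk.support_copy] at hγ
    obtain ⟨m, hm1, hm2, hmlt, rfl⟩ := hyhuS γ hγ
    refine ⟨hyP m hmlt, ?_, ?_⟩
    · rcases Nat.eq_zero_or_pos m with h | h
      · subst h
        rw [hy_u hmlt]
        exact hu_ne_xint mp hmp1 _
      · exact (hxy' mp hmp1 hmp2 _ m (by omega) (by omega) _).symm
    · rcases Nat.eq_zero_or_pos m with h | h
      · subst h
        rw [hy_u hmlt]
        exact hu_ne_xint (mp+1) (by omega) _
      · exact (hxy' (mp+1) (by omega) hmq2 _ m (by omega) (by omega) _).symm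
  -- the square and its attachment
  have adj11 : G.Adj (x ⟨mp, hmplt⟩) (y ⟨jp, hjplt⟩) := clique_adj hξW hρW d1
  have adj12 : G.Adj (x ⟨mp, hmplt⟩) (y ⟨jp+1, hjqlt⟩) := clique_adj hξW hρ'W d3
  have adj21 : G.Adj (x ⟨mp+1, hmqlt⟩) (y ⟨jp, hjplt⟩) := clique_adj hξ'W hρW d4.symm
  have adj22 : G.Adj (x ⟨mp+1, hmqlt⟩) (y ⟨jp+1, hjqlt⟩) := clique_adj hξ'W hρ'W d6
  obtain ⟨l1, l2, r1, r2, hlab1, hlab2, hatt⟩ :=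
    hsq mp jp hmp1 hmq2 hjp1 hjq2 adj11 adj12 adj21 adj22
  rcases hlab1 with ⟨hL1, hL2⟩ | ⟨hL1, hL2⟩ <;> rcases hlab2 with ⟨hR1, hR2⟩ | ⟨hR1, hR2⟩ <;>
    subst hL1 <;> subst hL2 <;> subst hR1 <;> subst hR2 <;>
    rcases hatt with hA1 | hA2
  -- case 1 : l = (A, C), r = (B, D)
  · obtain ⟨z, hzZ, z', hz'Z, hne, hnadjzz, ha1, ha2, ha3, ha4, hb1, hb2, hb3, hb4⟩ := hA1
    exact attach1_refute c hWp hWq hpq hξp hξ'q hξW hρW hξ'W hρ'W d1 d6 d2 d3 d4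
      ha1 ha2 ha3 ha4 hb1 hb2 hb3 hb4
      (fun h => hZP z hzZ (h ▸ hyP (jp+1) hjqlt))
      (fun h => hZP z' hz'Z (h ▸ hyP jp hjplt))
  · exact attach2_refute c hWp hWq hpq hZP
      (hxP mp hmplt) (hyP jp hjplt) (hxP (mp+1) hmqlt) (hyP (jp+1) hjqlt)
      hξp hρp hξ'q hρ'q hξW hρW hξ'W hρ'W d1 d6 d2 d3 d4 d5 hA2 hLu hLv
      (xtv0.copy rfl (hx_v (by omega))) hxtvP hBv
      (fun γ hγ hne => by
        obtain ⟨hP, hW, hA, hC, hD⟩ := Mxv γ hγ hne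
        exact ⟨hP, hW, hA, hC, hD⟩)
      (ytv0.copy rfl (hy_v (by omega)))
      (fun γ hγ => by
        obtain ⟨hP, hAx, hBx⟩ := MyvW γ hγ
        exact ⟨hP, hBx⟩)
      ((xhu0.copy (hx_u (by omega)) rfl).reverse) hxhuP hAu
      (fun γ hγ hne => by
        obtain ⟨hP, hW, hB, hC, hD⟩ := Mxu γ hγ hne
        exact ⟨hP, hW, hB, hD, hC⟩)
      ((yhu0.copy (hy_u (by omega)) rfl).reverse)
      (fun γ hγ => by
        obtain ⟨hP, hAx, hBx⟩ := MyuW γ hγ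
        exact ⟨hP, hAx⟩)
  -- case 3 : l = (A, C), r = (D, B)
  · obtain ⟨z, hzZ, z', hz'Z, hne, hnadjzz, ha1, ha2, ha3, ha4, hb1, hb2, hb3, hb4⟩ := hA1
    exact attach1_refute c hWp hWq hpq hξp hρ'q hξW hρW hρ'W hξ'W d1 d6.symm d3 d2 d5
      ha1 ha2 ha3 ha4 hb1 hb2 hb3 hb4
      (fun h => hZP z hzZ (h ▸ hxP (mp+1) hmqlt))
      (fun h => hZP z' hz'Z (h ▸ hyP jp hjplt))
  · exact attach2_refute c hWp hWq hpq hZP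
      (hxP mp hmplt) (hyP jp hjplt) (hyP (jp+1) hjqlt) (hxP (mp+1) hmqlt)
      hξp hρp hρ'q hξ'q hξW hρW hρ'W hξ'W d1 d6.symm d3 d2 d5 d4 hA2 hLu hLv
      (ytv0.copy rfl (hy_v (by omega))) hytvP hDv
      (fun γ hγ hne => by
        obtain ⟨hP, hW, hC, hA, hB⟩ := Myv γ hγ hne
        exact ⟨hP, hW, hA, hC, hB⟩)
      (xtv0.copy rfl (hx_v (by omega)))
      (fun γ hγ => by
        obtain ⟨hP, hCx, hDx⟩ := MxvW γ hγ
        exact ⟨hP, hDx⟩)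
      ((xhu0.copy (hx_u (by omega)) rfl).reverse) hxhuP hAu
      (fun γ hγ hne => by
        obtain ⟨hP, hW, hB, hC, hD⟩ := Mxu γ hγ hne
        exact ⟨hP, hW, hD, hB, hC⟩)
      ((yhu0.copy (hy_u (by omega)) rfl).reverse)
      (fun γ hγ => by
        obtain ⟨hP, hAx, hBx⟩ := MyuW γ hγ
        exact ⟨hP, hAx⟩)
  -- case 2 : l = (C, A), r = (B, D)
  · obtain ⟨z, hzZ, z', hz'Z, hne, hnadjzz, ha1, ha2, ha3, ha4, hb1, hb2, hb3, hb4⟩ := hA1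
    exact attach1_refute c hWp hWq hpq hρp hξ'q hρW hξW hξ'W hρ'W d1.symm d6 d4 d5 d2
      ha1 ha2 ha3 ha4 hb1 hb2 hb3 hb4
      (fun h => hZP z hzZ (h ▸ hyP (jp+1) hjqlt))
      (fun h => hZP z' hz'Z (h ▸ hxP mp hmplt))
  · exact attach2_refute c hWp hWq hpq hZP
      (hyP jp hjplt) (hxP mp hmplt) (hxP (mp+1) hmqlt) (hyP (jp+1) hjqlt)
      hρp hξp hξ'q hρ'q hρW hξW hξ'W hρ'W d1.symm d6 d4 d5 d2 d3 hA2 hLu hLv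
      (xtv0.copy rfl (hx_v (by omega))) hxtvP hBv
      (fun γ hγ hne => by
        obtain ⟨hP, hW, hA, hC, hD⟩ := Mxv γ hγ hne
        exact ⟨hP, hW, hC, hA, hD⟩)
      (ytv0.copy rfl (hy_v (by omega)))
      (fun γ hγ => by
        obtain ⟨hP, hAx, hBx⟩ := MyvW γ hγ
        exact ⟨hP, hBx⟩)
      ((yhu0.copy (hy_u (by omega)) rfl).reverse) hyhuP hCu
      (fun γ hγ hne => by
        obtain ⟨hP, hW, hD, hA, hB⟩ := Myu γ hγ hne
        exact ⟨hP, hW, hB, hD, hA⟩)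
      ((xhu0.copy (hx_u (by omega)) rfl).reverse)
      (fun γ hγ => by
        obtain ⟨hP, hCx, hDx⟩ := MxuW γ hγ
        exact ⟨hP, hCx⟩)
  -- case 4 : l = (C, A), r = (D, B)
  · obtain ⟨z, hzZ, z', hz'Z, hne, hnadjzz, ha1, ha2, ha3, ha4, hb1, hb2, hb3, hb4⟩ := hA1
    exact attach1_refute c hWp hWq hpq hρp hρ'q hρW hξW hρ'W hξ'W d1.symm d6.symm d5 d4 d3
      ha1 ha2 ha3 ha4 hb1 hb2 hb3 hb4
      (fun h => hZP z hzZ (h ▸ hxP (mp+1) hmqlt))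
      (fun h => hZP z' hz'Z (h ▸ hxP mp hmplt))
  · exact attach2_refute c hWp hWq hpq hZP
      (hyP jp hjplt) (hxP mp hmplt) (hyP (jp+1) hjqlt) (hxP (mp+1) hmqlt)
      hρp hξp hρ'q hξ'q hρW hξW hρ'W hξ'W d1.symm d6.symm d5 d4 d3 d2 hA2 hLu hLv
      (ytv0.copy rfl (hy_v (by omega))) hytvP hDv
      (fun γ hγ hne => by
        obtain ⟨hP, hW, hC, hA, hB⟩ := Myv γ hγ hne
        exact ⟨hP, hW, hC, hA, hB⟩)
      (xtv0.copy rfl (hx_v (by omega)))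
      (fun γ hγ => by
        obtain ⟨hP, hCx, hDx⟩ := MxvW γ hγ
        exact ⟨hP, hDx⟩)
      ((yhu0.copy (hy_u (by omega)) rfl).reverse) hyhuP hCu
      (fun γ hγ hne => by
        obtain ⟨hP, hW, hD, hA, hB⟩ := Myu γ hγ hne
        exact ⟨hP, hW, hD, hB, hA⟩)
      ((xhu0.copy (hx_u (by omega)) rfl).reverse)
      (fun γ hγ => by
        obtain ⟨hP, hCx, hDx⟩ := MxuW γ hγ
        exact ⟨hP, hCx⟩)

end RPGaux
namespace RPGaux
open SimpleGraph Walk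

attribute [local instance] Classical.propDecidable
set_option linter.unusedSectionVars false

variable {V : Type*} [Fintype V] {G : SimpleGraph V} (c : CliqueRPT G)

lemma linked_comp {u v : V} (huv : u ≠ v) (hnadj : ¬ G.Adj u v)
    (hlink : LinkedByStrongPath G u v) : Comp c u v := by
  rcases hlink with ⟨w, h1, h2⟩ | hmonster
  · exact comp_of_common_neighbor c h1 h2
  · obtain ⟨r, s, hr, hs, x, y, Z, hx0, hxl, hy0, hyl, hcx, hcy, hxy, hZ, hsq⟩ := hmonster
    exact monster_comp c huv hnadj hr hs hx0 hxl hy0 hyl hcx hcy hxy hZ hsq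

lemma pair_min_contra {u v z : V} (hpd : PD G u v z) (hlink : LinkedByStrongPath G u v)
    (hm1 : mdep c z ≤ mdep c u) (hm2 : mdep c z ≤ mdep c v) : False := by
  obtain ⟨h1, h2, h3, h4, h5, h6, ⟨w1, hw1⟩, ⟨w2, hw2⟩⟩ := hpd
  obtain ⟨X, hX, Y, hY, hor⟩ := linked_comp c h1 h2 hlink
  rcases hor with h | h
  · have := key_dir c X hX Y hY h w1 hw1 h3 h4
    omega
  · have := key_dir c Y hY X hX h w2 hw2 h5 h6
    omega

end RPGaux

theorem rootedPathGraph_no_weak_asteroidal_quadruple' {V : Type*} [Fintype V] (G : SimpleGraph V)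
    (hG : RootedPathGraph G) :
    ∀ a b c d : V, ¬ IsWeakAsteroidalQuadruple G a b c d := by
  classical
  intro a b c d h
  obtain ⟨T⟩ := hG
  obtain ⟨⟨hATabc, hLabc⟩, ⟨hATabd, hLabd⟩, ⟨hATacd, hLacd⟩, ⟨hATbcd, hLbcd⟩⟩ := h
  obtain ⟨γ, hγmem, hγmin⟩ :=
    Finset.exists_min_image ({a, b, c, d} : Finset V) (RPGaux.mdep T) ⟨a, by simp⟩
  have hma := hγmin a (by simp)
  have hmb := hγmin b (by simp)
  have hmc := hγmin c (by simp)
  have hmd := hγmin d (by simp)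
  simp only [Finset.mem_insert, Finset.mem_singleton] at hγmem
  rcases hγmem with rfl | rfl | rfl | rfl
  · rcases hLbcd with hl | hl | hl
    · exact RPGaux.pair_min_contra T (RPGaux.AT_pd_23 hATabc) hl hmb hmc
    · exact RPGaux.pair_min_contra T (RPGaux.AT_pd_23 hATacd) hl hmc hmd
    · exact RPGaux.pair_min_contra T (RPGaux.AT_pd_23 hATabd) hl hmb hmd
  · rcases hLacd with hl | hl | hl
    · exact RPGaux.pair_min_contra T (RPGaux.AT_pd_13 hATabc) hl hma hmc
    · exact RPGaux.pair_min_contra T (RPGaux.AT_pd_23 hATbcd) hl hmc hmd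
    · exact RPGaux.pair_min_contra T (RPGaux.AT_pd_13 hATabd) hl hma hmd
  · rcases hLabd with hl | hl | hl
    · exact RPGaux.pair_min_contra T (RPGaux.AT_pd_12 hATabc) hl hma hmb
    · exact RPGaux.pair_min_contra T (RPGaux.AT_pd_13 hATbcd) hl hmb hmd
    · exact RPGaux.pair_min_contra T (RPGaux.AT_pd_13 hATacd) hl hma hmd
  · rcases hLabc with hl | hl | hl
    · exact RPGaux.pair_min_contra T (RPGaux.AT_pd_12 hATabd) hl hma hmb
    · exact RPGaux.pair_min_contra T (RPGaux.AT_pd_12 hATbcd) hl hmb hmc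
    · exact RPGaux.pair_min_contra T (RPGaux.AT_pd_12 hATacd) hl hma hmc

/-- A rooted path graph contains no weak asteroidal quadruple. -/
theorem rootedPathGraph_no_weak_asteroidal_quadruple [Fintype V] (G : SimpleGraph V)
    (hG : RootedPathGraph G) :
    ∀ a b c d : V, ¬ IsWeakAsteroidalQuadruple G a b c d := by
  exact rootedPathGraph_no_weak_asteroidal_quadruple' G hG
end

section
/- If a chordal graph contains a weak asteroidal quadruple but no strong asteroidal triple, then it contains a parallel asteroidal quadruple, i.e., an asteroidal quadruple z1, z2, z3, z4 such that z1 and z2 are linked by a strong path and z3 and z4 are linked by a strong path. -/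
open SimpleGraph

variable {V : Type*}

lemma at_swap12 {G : SimpleGraph V} {a b c : V} (h : IsAsteroidalTriple G a b c) :
    IsAsteroidalTriple G b a c := by
  obtain ⟨h1, h2, h3, h4, h5, h6, ⟨p, hp⟩, ⟨q, hq⟩, ⟨r, hr⟩⟩ := h
  refine ⟨h1.symm, h3, h2, fun h => h4 h.symm, h6, h5, ⟨p.reverse, ?_⟩, ⟨r, hr⟩, ⟨q, hq⟩⟩
  intro x hx
  exact hp x (by simpa [SimpleGraph.Walk.support_reverse] using hx)

lemma at_swap23 {G : SimpleGraph V} {a b c : V} (h : IsAsteroidalTriple G a b c) :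
    IsAsteroidalTriple G a c b := by
  obtain ⟨h1, h2, h3, h4, h5, h6, ⟨p, hp⟩, ⟨q, hq⟩, ⟨r, hr⟩⟩ := h
  refine ⟨h3, h2.symm, h1, h6, fun h => h5 h.symm, h4, ⟨r, hr⟩, ⟨q.reverse, ?_⟩, ⟨p, hp⟩⟩
  intro x hx
  exact hq x (by simpa [SimpleGraph.Walk.support_reverse] using hx)

lemma pairs_helper {Pab Pac Pad Pbc Pbd Pcd : Prop}
    (h1 : Pab ∨ Pbc ∨ Pac) (h2 : Pab ∨ Pbd ∨ Pad)
    (h3 : Pac ∨ Pcd ∨ Pad) (h4 : Pbc ∨ Pcd ∨ Pbd)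
    (n1 : ¬ (Pab ∧ Pbc ∧ Pac)) (n2 : ¬ (Pab ∧ Pbd ∧ Pad))
    (n3 : ¬ (Pac ∧ Pcd ∧ Pad)) (n4 : ¬ (Pbc ∧ Pcd ∧ Pbd)) :
    (Pab ∧ Pcd) ∨ (Pac ∧ Pbd) ∨ (Pad ∧ Pbc) := by
  rcases h1 with h1 | h1 | h1 <;> rcases h2 with h2 | h2 | h2 <;>
    rcases h3 with h3 | h3 | h3 <;> rcases h4 with h4 | h4 | h4 <;>
    first
    | exact Or.inl ⟨‹Pab›, ‹Pcd›⟩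
    | exact Or.inr (Or.inl ⟨‹Pac›, ‹Pbd›⟩)
    | exact Or.inr (Or.inr ⟨‹Pad›, ‹Pbc›⟩)
    | exact absurd ⟨‹Pab›, ‹Pbc›, ‹Pac›⟩ n1
    | exact absurd ⟨‹Pab›, ‹Pbd›, ‹Pad›⟩ n2
    | exact absurd ⟨‹Pac›, ‹Pcd›, ‹Pad›⟩ n3
    | exact absurd ⟨‹Pbc›, ‹Pcd›, ‹Pbd›⟩ n4

/-- A chordal graph containing a weak asteroidal quadruple but no strong asteroidal
triple contains a parallel asteroidal quadruple. -/
theorem weak_quadruple_gives_parallel_quadruple [Fintype V] (G : SimpleGraph V)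
    (hG : IsChordal G)
    (hweak : ∃ a b c d : V, IsWeakAsteroidalQuadruple G a b c d)
    (hnostrong : ∀ a b c : V, ¬ IsStrongAsteroidalTriple G a b c) :
    ∃ z1 z2 z3 z4 : V, IsAsteroidalQuadruple G z1 z2 z3 z4 ∧
      LinkedByStrongPath G z1 z2 ∧ LinkedByStrongPath G z3 z4 := by
  obtain ⟨a, b, c, d, ⟨hATabc, hLabc⟩, ⟨hATabd, hLabd⟩, ⟨hATacd, hLacd⟩, ⟨hATbcd, hLbcd⟩⟩ :=
    hweak
  have habc : ¬ (LinkedByStrongPath G a b ∧ LinkedByStrongPath G b c ∧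
      LinkedByStrongPath G a c) := fun h => hnostrong a b c ⟨hATabc, h.1, h.2.1, h.2.2⟩
  have habd : ¬ (LinkedByStrongPath G a b ∧ LinkedByStrongPath G b d ∧
      LinkedByStrongPath G a d) := fun h => hnostrong a b d ⟨hATabd, h.1, h.2.1, h.2.2⟩
  have hacd : ¬ (LinkedByStrongPath G a c ∧ LinkedByStrongPath G c d ∧
      LinkedByStrongPath G a d) := fun h => hnostrong a c d ⟨hATacd, h.1, h.2.1, h.2.2⟩
  have hbcd : ¬ (LinkedByStrongPath G b c ∧ LinkedByStrongPath G c d ∧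
      LinkedByStrongPath G b d) := fun h => hnostrong b c d ⟨hATbcd, h.1, h.2.1, h.2.2⟩
  have key := pairs_helper hLabc hLabd hLacd hLbcd habc habd hacd hbcd
  rcases key with ⟨h1, h2⟩ | ⟨h1, h2⟩ | ⟨h1, h2⟩
  · exact ⟨a, b, c, d, ⟨hATabc, hATabd, hATacd, hATbcd⟩, h1, h2⟩
  · exact ⟨a, c, b, d, ⟨at_swap23 hATabc, hATacd, hATabd, at_swap12 hATbcd⟩, h1, h2⟩
  · exact ⟨a, d, b, c, ⟨at_swap23 hATabd, at_swap23 hATacd, hATabc,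
      at_swap12 (at_swap23 hATbcd)⟩, h1, h2⟩
end
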